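/- arXiv:2309.04202 — 8 statements merged into one kernel-verified Lean document; each statement's English description precedes it below -/
import Mathlib

section
/- Let X be a finite-dimensional real inner product space, let n ≥ 2, and let A_0, A_1, …, A_{n-1} be points in X, with indices read cyclically (A_n = A_0, A_{n+1} = A_1), such that A_i ≠ A_{i+1} for all i. For i = 1, …, n set φ_i := π − ∠A_{i-1}A_iA_{i+1}, where ∠A_{i-1}A_iA_{i+1} denotes the (unsigned) Euclidean angle at the vertex A_i between the points A_{i-1} and A_{i+1}. Then φ_1 + φ_2 + ⋯ + φ_n ≥ 2π. -/
open Real EuclideanGeometry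

section aux

variable {V : Type*} [NormedAddCommGroup V] [InnerProductSpace ℝ V]

local notation "⟪" x ", " y "⟫" => @inner ℝ V _ x y

set_option maxHeartbeats 800000 in
/-- Triangle inequality for angles between vectors. -/
lemma my_angle_triangle (x y z : V) :
    InnerProductGeometry.angle x z ≤
      InnerProductGeometry.angle x y + InnerProductGeometry.angle y z := by
  by_cases hx : x = 0
  · simp only [hx, InnerProductGeometry.angle_zero_left]
    linarith [InnerProductGeometry.angle_nonneg y z]
  by_cases hz : z = 0
  · simp only [hz, InnerProductGeometry.angle_zero_right]
    linarith [InnerProductGeometry.angle_nonneg x y]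
  by_cases hy : y = 0
  · simp only [hy, InnerProductGeometry.angle_zero_left,
      InnerProductGeometry.angle_zero_right]
    linarith [InnerProductGeometry.angle_le_pi x z]
  set α := InnerProductGeometry.angle x y with hα
  set β := InnerProductGeometry.angle y z with hβ
  set γ := InnerProductGeometry.angle x z with hγ
  rcases le_or_gt π (α + β) with h | h
  · exact (InnerProductGeometry.angle_le_pi x z).trans h
  have hα0 : 0 ≤ α := InnerProductGeometry.angle_nonneg x y
  have hβ0 : 0 ≤ β := InnerProductGeometry.angle_nonneg y z
  have hαπ : α ≤ π := InnerProductGeometry.angle_le_pi x y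
  have hβπ : β ≤ π := InnerProductGeometry.angle_le_pi y z
  have hγ0 : 0 ≤ γ := InnerProductGeometry.angle_nonneg x z
  have hγπ : γ ≤ π := InnerProductGeometry.angle_le_pi x z
  have hnx : (0:ℝ) < ‖x‖ := norm_pos_iff.mpr hx
  have hny : (0:ℝ) < ‖y‖ := norm_pos_iff.mpr hy
  have hnz : (0:ℝ) < ‖z‖ := norm_pos_iff.mpr hz
  have hxy : ⟪x, y⟫ = Real.cos α * (‖x‖ * ‖y‖) :=
    (InnerProductGeometry.cos_angle_mul_norm_mul_norm x y).symm
  have hzy : ⟪z, y⟫ = Real.cos β * (‖z‖ * ‖y‖) := by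
    rw [hβ, InnerProductGeometry.angle_comm y z]
    exact (InnerProductGeometry.cos_angle_mul_norm_mul_norm z y).symm
  have hxz : ⟪x, z⟫ = Real.cos γ * (‖x‖ * ‖z‖) :=
    (InnerProductGeometry.cos_angle_mul_norm_mul_norm x z).symm
  set u : V := x - (⟪x, y⟫ / ‖y‖ ^ 2) • y with hu
  set w : V := z - (⟪z, y⟫ / ‖y‖ ^ 2) • y with hw
  have hyy : ⟪y, y⟫ = ‖y‖ ^ 2 := real_inner_self_eq_norm_sq y
  have hny2 : (‖y‖ : ℝ) ^ 2 ≠ 0 := by positivity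
  have hsinα : 0 ≤ Real.sin α := Real.sin_nonneg_of_nonneg_of_le_pi hα0 hαπ
  have hsinβ : 0 ≤ Real.sin β := Real.sin_nonneg_of_nonneg_of_le_pi hβ0 hβπ
  have hsin2α : Real.sin α ^ 2 = 1 - Real.cos α ^ 2 := by
    have := Real.sin_sq_add_cos_sq α; linarith
  have hsin2β : Real.sin β ^ 2 = 1 - Real.cos β ^ 2 := by
    have := Real.sin_sq_add_cos_sq β; linarith
  have hun : ‖u‖ = Real.sin α * ‖x‖ := by
    have hinner : ⟪u, u⟫ = ‖x‖ ^ 2 - ⟪x, y⟫ ^ 2 / ‖y‖ ^ 2 := by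
      rw [hu]
      simp only [inner_sub_left, inner_sub_right, real_inner_smul_left,
        real_inner_smul_right]
      rw [real_inner_comm y x, hyy, real_inner_self_eq_norm_sq x]
      field_simp
      ring
    have h1 : ‖u‖ ^ 2 = (Real.sin α * ‖x‖) ^ 2 := by
      rw [← real_inner_self_eq_norm_sq u, hinner, hxy]
      have hr : (Real.sin α * ‖x‖) ^ 2 = (1 - Real.cos α ^ 2) * ‖x‖ ^ 2 := by
        rw [mul_pow, hsin2α]
      rw [hr]
      field_simp
    nlinarith [norm_nonneg u, mul_nonneg hsinα (norm_nonneg x)]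
  have hwn : ‖w‖ = Real.sin β * ‖z‖ := by
    have hinner : ⟪w, w⟫ = ‖z‖ ^ 2 - ⟪z, y⟫ ^ 2 / ‖y‖ ^ 2 := by
      rw [hw]
      simp only [inner_sub_left, inner_sub_right, real_inner_smul_left,
        real_inner_smul_right]
      rw [real_inner_comm y z, hyy, real_inner_self_eq_norm_sq z]
      field_simp
      ring
    have h1 : ‖w‖ ^ 2 = (Real.sin β * ‖z‖) ^ 2 := by
      rw [← real_inner_self_eq_norm_sq w, hinner, hzy]
      have hr : (Real.sin β * ‖z‖) ^ 2 = (1 - Real.cos β ^ 2) * ‖z‖ ^ 2 := by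
        rw [mul_pow, hsin2β]
      rw [hr]
      field_simp
    nlinarith [norm_nonneg w, mul_nonneg hsinβ (norm_nonneg z)]
  have hiuw : ⟪u, w⟫ = ⟪x, z⟫ - ⟪x, y⟫ * ⟪z, y⟫ / ‖y‖ ^ 2 := by
    rw [hu, hw]
    simp only [inner_sub_left, inner_sub_right, real_inner_smul_left,
      real_inner_smul_right]
    rw [real_inner_comm y z, real_inner_comm y x, hyy]
    field_simp
    try ring
  have hlow : -(‖u‖ * ‖w‖) ≤ ⟪u, w⟫ := by
    have h := abs_real_inner_le_norm u w
    have h1 := (abs_le.mp h).1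
    linarith
  rw [hun, hwn] at hlow
  have hq : ⟪x, y⟫ * ⟪z, y⟫ / ‖y‖ ^ 2 = Real.cos α * Real.cos β * (‖x‖ * ‖z‖) := by
    rw [hxy, hzy]
    field_simp
  have h2 : ⟪x, z⟫ = Real.cos α * Real.cos β * (‖x‖ * ‖z‖) + ⟪u, w⟫ := by
    rw [hiuw, ← hq]
    ring
  have hkey : Real.cos (α + β) * (‖x‖ * ‖z‖) ≤ ⟪x, z⟫ := by
    rw [h2, Real.cos_add]
    nlinarith [hlow]
  have hcos : Real.cos (α + β) ≤ Real.cos γ := by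
    rw [hxz] at hkey
    exact le_of_mul_le_mul_right hkey (mul_pos hnx hnz)
  by_contra hlt
  push_neg at hlt
  have := Real.cos_lt_cos_of_nonneg_of_le_pi (by linarith : (0:ℝ) ≤ α + β) hγπ hlt
  linarith

/-- The angle between `x` and `y` splits at `x + y`. -/
lemma my_angle_add_split {x y : V} (hx : x ≠ 0) (hy : y ≠ 0) :
    InnerProductGeometry.angle x (x + y) + InnerProductGeometry.angle (x + y) y =
      InnerProductGeometry.angle x y := by
  have h := EuclideanGeometry.angle_add_angle_add_angle_eq_pi
    (V := V) (p₁ := x) (p₂ := (0 : V)) (x + y)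
    (Ne.symm hx)
  simp only [EuclideanGeometry.angle, vsub_eq_sub, sub_zero, zero_sub,
    add_sub_cancel_left] at h
  have h1 : InnerProductGeometry.angle (-(x + y)) (x - (x + y)) =
      InnerProductGeometry.angle (x + y) y := by
    have hxy : x - (x + y) = -y := by abel
    rw [hxy]
    exact InnerProductGeometry.angle_neg_neg (x + y) y
  have h2 : InnerProductGeometry.angle y (-x) =
      π - InnerProductGeometry.angle x y := by
    rw [InnerProductGeometry.angle_neg_right, InnerProductGeometry.angle_comm]
  rw [h1, h2] at h
  linarith

/-- Key lemma: nonzero vectors summing to zero have cyclic angle sum at least `2π`. -/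
lemma key_vec_lemma : ∀ n : ℕ, 2 ≤ n → ∀ v : ℕ → V, (∀ i, i < n → v i ≠ 0) →
    (∑ i ∈ Finset.range n, v i = 0) →
    2 * π ≤ (∑ i ∈ Finset.range (n - 1),
        InnerProductGeometry.angle (v i) (v (i + 1)))
      + InnerProductGeometry.angle (v (n - 1)) (v 0) := by
  intro n
  induction n using Nat.strong_induction_on with
  | _ n IH =>
    intro hn v hv hsum
    match n, hn with
    | 2, _ =>
      have h01 : v 0 + v 1 = 0 := by
        simpa [Finset.sum_range_succ] using hsum
      have h1 : v 1 = -v 0 := eq_neg_of_add_eq_zero_right h01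
      norm_num [Finset.sum_range_one]
      rw [h1, InnerProductGeometry.angle_self_neg_of_nonzero (hv 0 (by norm_num)),
        InnerProductGeometry.angle_neg_self_of_nonzero (hv 0 (by norm_num))]
      linarith
    | (k+3), _ =>
      have hvk1 : v (k+1) ≠ 0 := hv _ (by omega)
      have hvk2 : v (k+2) ≠ 0 := hv _ (by omega)
      have hgoal : (∑ i ∈ Finset.range (k + 2),
            InnerProductGeometry.angle (v i) (v (i + 1)))
          = (∑ i ∈ Finset.range k, InnerProductGeometry.angle (v i) (v (i + 1)))
            + InnerProductGeometry.angle (v k) (v (k+1))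
            + InnerProductGeometry.angle (v (k+1)) (v (k+2)) := by
        rw [Finset.sum_range_succ, Finset.sum_range_succ]
      have hsum' : ∑ i ∈ Finset.range (k+1), v i + v (k+1) + v (k+2) = 0 := by
        simpa [Finset.sum_range_succ] using hsum
      show 2 * π ≤ (∑ i ∈ Finset.range (k + 2),
            InnerProductGeometry.angle (v i) (v (i + 1)))
          + InnerProductGeometry.angle (v (k + 2)) (v 0)
      by_cases hab : v (k+1) + v (k+2) = 0
      · -- degenerate case: the two last vectors cancel
        rcases Nat.eq_zero_or_pos k with hk0 | hkpos
        · exfalso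
          apply hv 0 (by norm_num)
          subst hk0
          have h2 : v 0 + (v 1 + v 2) = 0 := by
            rw [← add_assoc]
            simpa [Finset.sum_range_one] using hsum'
          rw [hab, add_zero] at h2
          exact h2
        · have hIH := IH (k+1) (by omega) (by omega) v
            (fun i hi => hv i (by omega))
            (by
              have h2 := hsum'
              rw [add_assoc, hab, add_zero] at h2
              exact h2)
          have hk1 : k + 1 - 1 = k := by omega
          rw [hk1] at hIH
          have hneg : v (k+2) = -(v (k+1)) := eq_neg_of_add_eq_zero_right hab
          have e1 : InnerProductGeometry.angle (v (k+1)) (v (k+2)) = π := by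
            rw [hneg]; exact InnerProductGeometry.angle_self_neg_of_nonzero hvk1
          have e2 : InnerProductGeometry.angle (v (k+2)) (v 0) =
              π - InnerProductGeometry.angle (v (k+1)) (v 0) := by
            rw [hneg]; exact InnerProductGeometry.angle_neg_left _ _
          have hle1 := InnerProductGeometry.angle_le_pi (v k) (v 0)
          have hle2 := InnerProductGeometry.angle_le_pi (v (k+1)) (v 0)
          have hge1 := InnerProductGeometry.angle_nonneg (v k) (v (k+1))
          rw [hgoal, e1, e2]
          linarith
      · -- main case: merge the two last vectors
        set s := v (k+1) + v (k+2) with hs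
        set w : ℕ → V := fun i => if i = k+1 then s else v i with hwdef
        have hw_eq : ∀ i, i ≠ k+1 → w i = v i := by
          intro i hi; simp [hwdef, hi]
        have hwk1 : w (k+1) = s := by simp [hwdef]
        have hIH := IH (k+2) (by omega) (by omega) w
          (by
            intro i hi
            by_cases h : i = k+1
            · rw [h, hwk1]; exact hab
            · rw [hw_eq i h]; exact hv i (by omega))
          (by
            rw [Finset.sum_range_succ, hwk1]
            have hww : ∑ i ∈ Finset.range (k+1), w i = ∑ i ∈ Finset.range (k+1), v i := by
              apply Finset.sum_congr rfl
              intro i hi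
              simp only [Finset.mem_range] at hi
              exact hw_eq i (by omega)
            rw [hww, hs, ← add_assoc]
            exact hsum')
        have hk2 : k + 2 - 1 = k + 1 := by omega
        rw [hk2, Finset.sum_range_succ] at hIH
        have hw0 : w 0 = v 0 := hw_eq 0 (by omega)
        have hwk : w k = v k := hw_eq k (by omega)
        have hsum_eq : ∑ i ∈ Finset.range k,
            InnerProductGeometry.angle (w i) (w (i + 1))
            = ∑ i ∈ Finset.range k, InnerProductGeometry.angle (v i) (v (i + 1)) := by
          apply Finset.sum_congr rfl
          intro i hi
          simp only [Finset.mem_range] at hi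
          rw [hw_eq i (by omega), hw_eq (i+1) (by omega)]
        rw [hsum_eq, hwk, hwk1, hw0] at hIH
        have ht1 := my_angle_triangle (v k) (v (k+1)) s
        have ht2 := my_angle_triangle s (v (k+2)) (v 0)
        have hsplit := my_angle_add_split hvk1 hvk2
        rw [← hs] at hsplit
        rw [hgoal]
        linarith

end aux

/-- **Lemma (closed polygon angle sum).** If `A 0, …, A (n-1)` are points in a
finite-dimensional real inner product space, read cyclically, with consecutive
points distinct, then the sum of the exterior angles `π − ∠ A_{i-1} A_i A_{i+1}`
is at least `2π`. -/
theorem closed_polygon_exterior_angle_sum_ge_two_pi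
    {X : Type*} [NormedAddCommGroup X] [InnerProductSpace ℝ X]
    [FiniteDimensional ℝ X]
    (n : ℕ) (hn : 2 ≤ n) (A : ℕ → X)
    (hper : ∀ i, A (i + n) = A i)
    (hne : ∀ i, A i ≠ A (i + 1)) :
    2 * π ≤ ∑ i ∈ Finset.range n,
      (π - EuclideanGeometry.angle (A i) (A (i + 1)) (A (i + 2))) := by
  set v : ℕ → X := fun i => A (i + 1) - A i with hv
  have hvne : ∀ i, v i ≠ 0 := fun i => sub_ne_zero_of_ne (hne i).symm
  have hsum : ∑ i ∈ Finset.range n, v i = 0 := by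
    rw [hv]
    rw [Finset.sum_range_sub (fun i => A i)]
    have h0 := hper 0
    rw [zero_add] at h0
    rw [h0, sub_self]
  have hterm : ∀ i, π - EuclideanGeometry.angle (A i) (A (i + 1)) (A (i + 2))
      = InnerProductGeometry.angle (v i) (v (i + 1)) := by
    intro i
    have he : EuclideanGeometry.angle (A i) (A (i + 1)) (A (i + 2))
        = InnerProductGeometry.angle (-(v i)) (v (i+1)) := by
      simp only [EuclideanGeometry.angle, vsub_eq_sub, hv, neg_sub]
    rw [he, InnerProductGeometry.angle_neg_left]
    ring
  rw [Finset.sum_congr rfl (fun i _ => hterm i)]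
  have hvn : v n = v 0 := by
    rw [hv]
    simp only
    have h1 : A (n + 1) = A 1 := by rw [add_comm]; exact hper 1
    have h0 : A n = A 0 := by have := hper 0; rwa [zero_add] at this
    rw [h1, h0]
  have hsplit : ∑ i ∈ Finset.range n, InnerProductGeometry.angle (v i) (v (i + 1))
      = (∑ i ∈ Finset.range (n - 1), InnerProductGeometry.angle (v i) (v (i + 1)))
        + InnerProductGeometry.angle (v (n - 1)) (v 0) := by
    obtain ⟨m, rfl⟩ : ∃ m, n = m + 1 := ⟨n - 1, by omega⟩
    rw [Finset.sum_range_succ]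
    simp only [Nat.add_sub_cancel]
    rw [hvn]
  rw [hsplit]
  exact key_vec_lemma n hn v (fun i _ => hvne i) hsum
end

section
/- Let X be a finite-dimensional real inner product space, let n ≥ 2, and let A_0, A_1, …, A_{n-1} be points in X, with indices read cyclically (A_n = A_0, A_{n+1} = A_1), such that A_i ≠ A_{i+1} for all i. For i = 1, …, n set φ_i := π − ∠A_{i-1}A_iA_{i+1}. If φ_1 + φ_2 + ⋯ + φ_n = 2π, then the points A_0, A_1, …, A_{n-1} all lie in a common two-dimensional affine subspace of X. -/
open Real

namespace ClosedPolygonAux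

open InnerProductGeometry

variable {X : Type*} [NormedAddCommGroup X] [InnerProductSpace ℝ X]

local notation "⟪" x ", " y "⟫" => @inner ℝ _ _ x y

lemma aux_inner (x z y : X) (hy : ‖y‖ = 1) :
    ⟪x - ⟪x, y⟫ • y, z - ⟪z, y⟫ • y⟫ = ⟪x, z⟫ - ⟪x, y⟫ * ⟪z, y⟫ := by
  have hyy : ⟪y, y⟫ = (1:ℝ) := by rw [real_inner_self_eq_norm_sq, hy]; norm_num
  simp only [inner_sub_left, inner_sub_right, real_inner_smul_left, real_inner_smul_right, hyy]
  rw [real_inner_comm y x, real_inner_comm y z, real_inner_comm z x]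
  ring

lemma aux_norm (x y : X) (hy : ‖y‖ = 1) :
    ‖x - ⟪x, y⟫ • y‖ = Real.sqrt (‖x‖ ^ 2 - ⟪x, y⟫ ^ 2) := by
  rw [← Real.sqrt_sq (norm_nonneg (x - ⟪x, y⟫ • y)), ← real_inner_self_eq_norm_sq]
  rw [aux_inner x x y hy, real_inner_self_eq_norm_sq]
  ring_nf

lemma cos_angle_unit {x y : X} (hx : ‖x‖ = 1) (hy : ‖y‖ = 1) :
    Real.cos (angle x y) = ⟪x, y⟫ := by
  rw [InnerProductGeometry.cos_angle, hx, hy]; simp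

lemma sin_angle_unit {x y : X} (hx : ‖x‖ = 1) (hy : ‖y‖ = 1) :
    Real.sin (angle x y) = Real.sqrt (1 - ⟪x, y⟫ ^ 2) := by
  have h1 : Real.sin (angle x y) ^ 2 = 1 - ⟪x, y⟫ ^ 2 := by
    have := Real.sin_sq_add_cos_sq (angle x y); rw [cos_angle_unit hx hy] at this; linarith
  rw [← h1, Real.sqrt_sq (Real.sin_nonneg_of_nonneg_of_le_pi
    (angle_nonneg _ _) (angle_le_pi _ _))]

set_option maxHeartbeats 1000000 in
/-- Cosine bound for unit vectors: `cos (α + β) ≤ cos γ`. -/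
lemma cos_key {x y z : X} (hx : ‖x‖ = 1) (hy : ‖y‖ = 1) (hz : ‖z‖ = 1) :
    Real.cos (angle x y + angle y z) ≤ Real.cos (angle x z) := by
  have hun : ‖x - ⟪x, y⟫ • y‖ = Real.sqrt (1 - ⟪x, y⟫ ^ 2) := by
    rw [aux_norm x y hy, hx]; norm_num
  have hwn : ‖z - ⟪z, y⟫ • y‖ = Real.sqrt (1 - ⟪z, y⟫ ^ 2) := by
    rw [aux_norm z y hy, hz]; norm_num
  have hcs : -(‖x - ⟪x, y⟫ • y‖ * ‖z - ⟪z, y⟫ • y‖) ≤ ⟪x - ⟪x, y⟫ • y, z - ⟪z, y⟫ • y⟫ :=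
    neg_le_of_abs_le (abs_real_inner_le_norm _ _)
  rw [aux_inner x z y hy, hun, hwn] at hcs
  rw [Real.cos_add, cos_angle_unit hx hy, cos_angle_unit hy hz, cos_angle_unit hx hz,
    sin_angle_unit hx hy, sin_angle_unit hy hz]
  rw [real_inner_comm y z] at hcs
  linarith

/-- Triangle inequality for vector angles (unit vectors). -/
lemma angle_triangle_unit {x y z : X} (hx : ‖x‖ = 1) (hy : ‖y‖ = 1) (hz : ‖z‖ = 1) :
    angle x z ≤ angle x y + angle y z := by
  by_cases hπ : π ≤ angle x y + angle y z
  · exact le_trans (angle_le_pi _ _) hπ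
  push_neg at hπ
  by_contra hlt
  push_neg at hlt
  have h1 : Real.cos (angle x z) < Real.cos (angle x y + angle y z) :=
    Real.strictAntiOn_cos ⟨add_nonneg (angle_nonneg _ _) (angle_nonneg _ _), le_of_lt hπ⟩
      ⟨angle_nonneg _ _, angle_le_pi _ _⟩ hlt
  linarith [cos_key hx hy hz]

lemma norm_inv_smul_unit {x : X} (hx : x ≠ 0) : ‖(‖x‖⁻¹ • x)‖ = 1 := by
  rw [norm_smul, norm_inv, norm_norm, inv_mul_cancel₀ (norm_ne_zero_iff.2 hx)]

lemma angle_normalize (p q : X) (hp : p ≠ 0) (hq : q ≠ 0) :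
    angle p q = angle (‖p‖⁻¹ • p) (‖q‖⁻¹ • q) := by
  rw [angle_smul_left_of_pos _ _ (inv_pos.2 (norm_pos_iff.2 hp)),
    angle_smul_right_of_pos _ _ (inv_pos.2 (norm_pos_iff.2 hq))]

/-- Triangle inequality for vector angles. -/
lemma angle_triangle' {x y z : X} (hx : x ≠ 0) (hy : y ≠ 0) (hz : z ≠ 0) :
    angle x z ≤ angle x y + angle y z := by
  rw [angle_normalize x z hx hz, angle_normalize x y hx hy, angle_normalize y z hy hz]
  exact angle_triangle_unit (norm_inv_smul_unit hx) (norm_inv_smul_unit hy)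
    (norm_inv_smul_unit hz)

/-- Equality case (betweenness), unit vectors. -/
lemma between_unit {x y z : X} (hx : ‖x‖ = 1) (hy : ‖y‖ = 1) (hz : ‖z‖ = 1)
    (h : angle x y + angle y z = angle x z) (hlt : angle x z < π) :
    y ∈ Submodule.span ℝ ({x, z} : Set X) := by
  have hx0 : x ≠ 0 := by intro h0; rw [h0] at hx; simp at hx
  have hy0 : y ≠ 0 := by intro h0; rw [h0] at hy; simp at hy
  have hz0 : z ≠ 0 := by intro h0; rw [h0] at hz; simp at hz
  have hxx : ⟪x, x⟫ = (1:ℝ) := by rw [real_inner_self_eq_norm_sq, hx]; norm_num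
  have hyy : ⟪y, y⟫ = (1:ℝ) := by rw [real_inner_self_eq_norm_sq, hy]; norm_num
  have hzz : ⟪z, z⟫ = (1:ℝ) := by rw [real_inner_self_eq_norm_sq, hz]; norm_num
  set u : X := x - ⟪x, y⟫ • y with hu
  set w : X := z - ⟪z, y⟫ • y with hw
  have hun : ‖u‖ = Real.sqrt (1 - ⟪x, y⟫ ^ 2) := by
    rw [hu, aux_norm x y hy, hx]; norm_num
  have hwn : ‖w‖ = Real.sqrt (1 - ⟪z, y⟫ ^ 2) := by
    rw [hw, aux_norm z y hy, hz]; norm_num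
  have huw : ⟪u, w⟫ = ⟪x, z⟫ - ⟪x, y⟫ * ⟪z, y⟫ := by
    rw [hu, hw]; exact aux_inner x z y hy
  have hcosγ : Real.cos (angle x z) = ⟪x, y⟫ * ⟪z, y⟫
      - Real.sqrt (1 - ⟪x, y⟫ ^ 2) * Real.sqrt (1 - ⟪z, y⟫ ^ 2) := by
    rw [← h, Real.cos_add, cos_angle_unit hx hy, cos_angle_unit hy hz,
      sin_angle_unit hx hy, sin_angle_unit hy hz, real_inner_comm y z]
  have hinner : ⟪u, w⟫ = -(‖u‖ * ‖w‖) := by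
    rw [huw, hun, hwn]
    have := cos_angle_unit hx hz
    rw [hcosγ] at this
    linarith
  by_cases hu0 : u = 0
  · obtain ⟨a, ha⟩ : ∃ a : ℝ, ⟪x, y⟫ = a := ⟨_, rfl⟩
    have hxay : x = a • y := by
      have h1 := hu0; rw [hu, sub_eq_zero, ha] at h1; exact h1
    have ha2 : a * a = 1 := by
      have h2 := hxx
      rw [hxay] at h2
      simp only [real_inner_smul_left, real_inner_smul_right, hyy] at h2
      linarith
    have hyx : y = a • x := by
      rw [hxay, smul_smul, ha2, one_smul]
    rw [hyx]
    exact Submodule.smul_mem _ _ (Submodule.subset_span (by simp))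
  by_cases hw0 : w = 0
  · obtain ⟨b, hb⟩ : ∃ b : ℝ, ⟪z, y⟫ = b := ⟨_, rfl⟩
    have hzby : z = b • y := by
      have h1 := hw0; rw [hw, sub_eq_zero, hb] at h1; exact h1
    have hb2 : b * b = 1 := by
      have h2 := hzz
      rw [hzby] at h2
      simp only [real_inner_smul_left, real_inner_smul_right, hyy] at h2
      linarith
    have hyz : y = b • z := by
      rw [hzby, smul_smul, hb2, one_smul]
    rw [hyz]
    exact Submodule.smul_mem _ _ (Submodule.subset_span (by simp))
  have hangleuw : angle u w = π :=
    (inner_eq_neg_mul_norm_iff_angle_eq_pi hu0 hw0).1 hinner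
  obtain ⟨-, r, hr, hwr⟩ := angle_eq_pi_iff.1 hangleuw
  obtain ⟨a, ha⟩ : ∃ a : ℝ, ⟪x, y⟫ = a := ⟨_, rfl⟩
  obtain ⟨b, hb⟩ : ∃ b : ℝ, ⟪z, y⟫ = b := ⟨_, rfl⟩
  have h1 : z - b • y = r • (x - a • y) := by rw [← ha, ← hb, ← hu, ← hw]; exact hwr
  have hzeq : z = r • x + (b - r * a) • y := by
    have h2 : z = r • (x - a • y) + b • y := by rw [← h1]; abel
    rw [h2, smul_sub, smul_smul, sub_smul]; abel
  by_cases hba : b - r * a = 0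
  · have hzrx : z = r • x := by rw [hzeq, hba, zero_smul, add_zero]
    have hpi : angle x z = π := by
      rw [hzrx, angle_smul_right_of_neg _ _ hr, angle_neg_right, angle_self hx0, sub_zero]
    exact absurd hpi (ne_of_lt hlt)
  · have hy' : y = (b - r * a)⁻¹ • (z - r • x) := by
      rw [eq_comm, inv_smul_eq_iff₀ hba, hzeq]
      abel
    rw [hy']
    exact Submodule.smul_mem _ _ (Submodule.sub_mem _ (Submodule.subset_span (by simp))
      (Submodule.smul_mem _ _ (Submodule.subset_span (by simp))))

/-- Equality case (betweenness) for vector angles. -/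
lemma between_of_angle_add {x y z : X} (hx : x ≠ 0) (hy : y ≠ 0) (hz : z ≠ 0)
    (h : angle x y + angle y z = angle x z) (hlt : angle x z < π) :
    y ∈ Submodule.span ℝ ({x, z} : Set X) := by
  have h' : angle (‖x‖⁻¹ • x) (‖y‖⁻¹ • y) + angle (‖y‖⁻¹ • y) (‖z‖⁻¹ • z)
      = angle (‖x‖⁻¹ • x) (‖z‖⁻¹ • z) := by
    rw [← angle_normalize x y hx hy, ← angle_normalize y z hy hz,
      ← angle_normalize x z hx hz]; exact h
  have hlt' : angle (‖x‖⁻¹ • x) (‖z‖⁻¹ • z) < π := by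
    rw [← angle_normalize x z hx hz]; exact hlt
  have hmem := between_unit (norm_inv_smul_unit hx) (norm_inv_smul_unit hy)
    (norm_inv_smul_unit hz) h' hlt'
  have hsub : Submodule.span ℝ ({‖x‖⁻¹ • x, ‖z‖⁻¹ • z} : Set X)
      ≤ Submodule.span ℝ ({x, z} : Set X) := by
    rw [Submodule.span_le]
    rintro p (rfl | rfl)
    · exact Submodule.smul_mem _ _ (Submodule.subset_span (by simp))
    · exact Submodule.smul_mem _ _ (Submodule.subset_span (by simp))
  have hy' : y = ‖y‖ • (‖y‖⁻¹ • y) := by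
    rw [smul_smul, mul_inv_cancel₀ (norm_ne_zero_iff.2 hy), one_smul]
  rw [hy']
  exact Submodule.smul_mem _ _ (hsub hmem)

/-- The key identity `angle x (x+y) + angle (x+y) y = angle x y`. -/
lemma angle_split {x y : X} (hx : x ≠ 0) (hy : y ≠ 0) (hv : x + y ≠ 0) :
    angle x (x + y) + angle (x + y) y = angle x y := by
  have h := angle_add_angle_sub_add_angle_sub_eq_pi (x := x + y) (y := x) hx
  have h1 : x + y - x = y := by abel
  have h2 : x - (x + y) = -y := by abel
  rw [h1, h2, angle_neg_right] at h
  have hc : angle (x + y) x = angle x (x + y) := angle_comm _ _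
  linarith

/-- Sum of consecutive angles along a list (no wraparound). -/
noncomputable def chain : List X → ℝ
  | [] => 0
  | [_] => 0
  | x :: y :: t => InnerProductGeometry.angle x y + chain (y :: t)

@[simp] lemma chain_nil : chain ([] : List X) = 0 := by rw [chain]
@[simp] lemma chain_single (x : X) : chain [x] = 0 := by rw [chain]
@[simp] lemma chain_cons_cons (x y : X) (t : List X) :
    chain (x :: y :: t) = InnerProductGeometry.angle x y + chain (y :: t) := by rw [chain]

lemma chain_nonneg : ∀ l : List X, 0 ≤ chain l := by
  intro l
  induction l with
  | nil => simp
  | cons x t ih =>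
    cases t with
    | nil => simp
    | cons y t' => simpa using add_nonneg (angle_nonneg x y) ih

lemma chain_eq_zero : ∀ (x : X) (t : List X), (∀ z ∈ x :: t, z ≠ 0) →
    chain (x :: t) = 0 → ∀ z ∈ x :: t, ∃ c : ℝ, z = c • x := by
  intro x t
  induction t generalizing x with
  | nil =>
    intro _ _ z hz
    simp only [List.mem_singleton] at hz
    exact ⟨1, by simp [hz]⟩
  | cons y t' ih =>
    intro hnz h z hz
    simp only [chain_cons_cons] at h
    have hang : InnerProductGeometry.angle x y = 0 := by
      have := chain_nonneg (y :: t')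
      have := angle_nonneg x y
      linarith
    have hch : chain (y :: t') = 0 := by
      have := chain_nonneg (y :: t')
      have := angle_nonneg x y
      linarith
    obtain ⟨-, r, -, hyr⟩ := angle_eq_zero_iff.1 hang
    rcases List.mem_cons.1 hz with rfl | hz'
    · exact ⟨1, by simp⟩
    · obtain ⟨c, hc⟩ := ih y (fun w hw => hnz w (List.mem_cons_of_mem _ hw)) hch z hz'
      exact ⟨c * r, by rw [hc, hyr, smul_smul]⟩


theorem fenchel : ∀ (n : ℕ) (x : X) (t : List X), (x :: t).length = n → 2 ≤ n →
    (∀ z ∈ x :: t, z ≠ 0) → (x :: t).sum = 0 →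
    2 * π ≤ chain (x :: t) + InnerProductGeometry.angle (t.getLastD x) x := by
  intro n
  induction n using Nat.strong_induction_on with
  | _ n ih =>
    intro x t hlen hn hnz hsum
    have hx0 : x ≠ 0 := hnz x (by simp)
    rcases t with - | ⟨y, t₂⟩
    · simp at hlen; omega
    have hy0 : y ≠ 0 := hnz y (by simp)
    rcases t₂ with - | ⟨z, t₃⟩
    · -- n = 2
      have hxy : x + y = 0 := by simpa using hsum
      have hy : y = -x := by
        rw [add_eq_zero_iff_eq_neg] at hxy
        rw [hxy, neg_neg]
      subst hy
      simp only [List.getLastD_cons, List.getLastD_nil, chain_cons_cons, chain_single,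
        angle_self_neg_of_nonzero hx0, angle_neg_self_of_nonzero hx0]
      linarith
    · have hz0 : z ≠ 0 := hnz z (by simp)
      have hlen' : t₃.length + 3 = n := by
        simp only [List.length_cons] at hlen; omega
      have hLlist : (y :: z :: t₃).getLastD x = t₃.getLastD z := by
        rw [List.getLastD_cons, List.getLastD_cons]
      have hLmem : t₃.getLastD z ∈ x :: y :: z :: t₃ :=
        List.mem_cons_of_mem _ (List.mem_cons_of_mem _ (List.getLastD_mem_cons (l := t₃) (a := z)))
      have hL0 : t₃.getLastD z ≠ 0 := hnz _ hLmem
      rw [chain_cons_cons, chain_cons_cons, hLlist]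
      by_cases hv : x + y = 0
      · have hyx : y = -x := by
          rw [add_eq_zero_iff_eq_neg] at hv
          rw [hv, neg_neg]
        have hxy' : x = -y := by rw [hyx, neg_neg]
        have hsumt : (z :: t₃).sum = 0 := by
          have h1 : x + (y + (z :: t₃).sum) = 0 := by
            simp only [List.sum_cons] at hsum; exact hsum
          rw [hyx, add_neg_cancel_left] at h1; exact h1
        rcases t₃ with - | ⟨w, t₄⟩
        · simp at hsumt; exact absurd hsumt hz0
        · simp only [List.length_cons] at hlen'
          have hIH := ih (t₄.length + 2) (by omega) z (w :: t₄) (by simp) (by omega)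
            (fun p hp => hnz p (List.mem_cons_of_mem _ (List.mem_cons_of_mem _ hp))) hsumt
          have tri := angle_triangle' hL0 hx0 hz0
          have hxz : InnerProductGeometry.angle x z
              = π - InnerProductGeometry.angle y z := by rw [hxy', angle_neg_left]
          have hxypi : InnerProductGeometry.angle x y = π := by
            rw [hyx, angle_self_neg_of_nonzero hx0]
          have h0 := angle_nonneg y z
          linarith
      · have hnz' : ∀ p ∈ (x + y) :: z :: t₃, p ≠ 0 := by
          rintro p hp
          rcases List.mem_cons.1 hp with rfl | hp'
          · exact hv
          · exact hnz p (List.mem_cons_of_mem _ (List.mem_cons_of_mem _ hp'))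
        have hsum' : ((x + y) :: z :: t₃).sum = 0 := by
          simp only [List.sum_cons] at hsum ⊢
          rw [add_assoc]; exact hsum
        have hIH := ih (n - 1) (by omega) (x + y) (z :: t₃)
          (by simp only [List.length_cons]; omega) (by omega) hnz' hsum'
        rw [chain_cons_cons, List.getLastD_cons] at hIH
        have tri1 := angle_triangle' hv hy0 hz0
        have tri2 := angle_triangle' hL0 hx0 hv
        have key := angle_split hx0 hy0 hv
        linarith

theorem fenchel_eq : ∀ (n : ℕ) (x : X) (t : List X), (x :: t).length = n → 2 ≤ n →
    (∀ z ∈ x :: t, z ≠ 0) → (x :: t).sum = 0 →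
    chain (x :: t) + InnerProductGeometry.angle (t.getLastD x) x = 2 * π →
    ∃ a b : X, ∀ z ∈ x :: t, z ∈ Submodule.span ℝ ({a, b} : Set X) := by
  intro n
  induction n using Nat.strong_induction_on with
  | _ n ih =>
    intro x t hlen hn hnz hsum heq
    have hx0 : x ≠ 0 := hnz x (by simp)
    rcases t with - | ⟨y, t₂⟩
    · simp at hlen; omega
    have hy0 : y ≠ 0 := hnz y (by simp)
    rcases t₂ with - | ⟨z, t₃⟩
    · have hxy : x + y = 0 := by simpa using hsum
      have hy : y = -x := by
        rw [add_eq_zero_iff_eq_neg] at hxy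
        rw [hxy, neg_neg]
      refine ⟨x, x, ?_⟩
      intro p hp
      rcases List.mem_cons.1 hp with h1 | hp'
      · rw [h1]; exact Submodule.subset_span (by simp)
      · simp only [List.mem_singleton] at hp'
        rw [hp', hy]
        exact Submodule.neg_mem _ (Submodule.subset_span (by simp))
    · have hz0 : z ≠ 0 := hnz z (by simp)
      have hlen' : t₃.length + 3 = n := by
        simp only [List.length_cons] at hlen; omega
      have hLlist : (y :: z :: t₃).getLastD x = t₃.getLastD z := by
        rw [List.getLastD_cons, List.getLastD_cons]
      have hLmem : t₃.getLastD z ∈ x :: y :: z :: t₃ :=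
        List.mem_cons_of_mem _ (List.mem_cons_of_mem _ (List.getLastD_mem_cons (l := t₃) (a := z)))
      have hL0 : t₃.getLastD z ≠ 0 := hnz _ hLmem
      rw [chain_cons_cons, chain_cons_cons, hLlist] at heq
      by_cases hv : x + y = 0
      · have hyx : y = -x := by
          rw [add_eq_zero_iff_eq_neg] at hv
          rw [hv, neg_neg]
        have hxy' : x = -y := by rw [hyx, neg_neg]
        have hsumt : (z :: t₃).sum = 0 := by
          have h1 : x + (y + (z :: t₃).sum) = 0 := by
            simp only [List.sum_cons] at hsum; exact hsum
          rw [hyx, add_neg_cancel_left] at h1; exact h1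
        rcases t₃ with - | ⟨w, t₄⟩
        · simp at hsumt; exact absurd hsumt hz0
        · simp only [List.length_cons] at hlen'
          have hnz'' : ∀ p ∈ z :: w :: t₄, p ≠ 0 :=
            fun p hp => hnz p (List.mem_cons_of_mem _ (List.mem_cons_of_mem _ hp))
          have low := fenchel (t₄.length + 2) z (w :: t₄) (by simp) (by omega) hnz'' hsumt
          have tri := angle_triangle' hL0 hx0 hz0
          have hxz : InnerProductGeometry.angle x z
              = π - InnerProductGeometry.angle y z := by rw [hxy', angle_neg_left]
          have hxypi : InnerProductGeometry.angle x y = π := by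
            rw [hyx, angle_self_neg_of_nonzero hx0]
          have h0 := angle_nonneg y z
          have hyz0 : InnerProductGeometry.angle y z = 0 := le_antisymm (by linarith) h0
          have heq2 : chain (z :: w :: t₄)
              + InnerProductGeometry.angle ((w :: t₄).getLastD z) z = 2 * π :=
            le_antisymm (by linarith) low
          obtain ⟨a, b, hab⟩ := ih (t₄.length + 2) (by omega) z (w :: t₄) (by simp)
            (by omega) hnz'' hsumt heq2
          obtain ⟨-, r, hr, hzy⟩ := angle_eq_zero_iff.1 hyz0
          have hymem : y ∈ Submodule.span ℝ ({a, b} : Set X) := by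
            have hy' : y = r⁻¹ • z := by
              rw [hzy, smul_smul, inv_mul_cancel₀ (ne_of_gt hr), one_smul]
            rw [hy']
            exact Submodule.smul_mem _ _ (hab z (by simp))
          refine ⟨a, b, ?_⟩
          intro p hp
          rcases List.mem_cons.1 hp with h1 | hp'
          · rw [h1, hxy']
            exact Submodule.neg_mem _ hymem
          rcases List.mem_cons.1 hp' with h2 | hp''
          · rw [h2]; exact hymem
          · exact hab p hp''
      · have hnz' : ∀ p ∈ (x + y) :: z :: t₃, p ≠ 0 := by
          rintro p hp
          rcases List.mem_cons.1 hp with rfl | hp'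
          · exact hv
          · exact hnz p (List.mem_cons_of_mem _ (List.mem_cons_of_mem _ hp'))
        have hsum' : ((x + y) :: z :: t₃).sum = 0 := by
          simp only [List.sum_cons] at hsum ⊢
          rw [add_assoc]; exact hsum
        have low := fenchel (n - 1) (x + y) (z :: t₃)
          (by simp only [List.length_cons]; omega) (by omega) hnz' hsum'
        rw [chain_cons_cons, List.getLastD_cons] at low
        have tri1 := angle_triangle' hv hy0 hz0
        have tri2 := angle_triangle' hL0 hx0 hv
        have key := angle_split hx0 hy0 hv
        have E1 : InnerProductGeometry.angle (x + y) y + InnerProductGeometry.angle y z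
            = InnerProductGeometry.angle (x + y) z := by linarith
        have E2 : InnerProductGeometry.angle (t₃.getLastD z) x
            + InnerProductGeometry.angle x (x + y)
            = InnerProductGeometry.angle (t₃.getLastD z) (x + y) := by linarith
        have Enew : chain ((x + y) :: z :: t₃)
            + InnerProductGeometry.angle ((z :: t₃).getLastD (x + y)) (x + y) = 2 * π := by
          rw [chain_cons_cons, List.getLastD_cons]; linarith
        obtain ⟨a, b, hab⟩ := ih (n - 1) (by omega) (x + y) (z :: t₃)
          (by simp only [List.length_cons]; omega) (by omega) hnz' hsum' Enew
        have hvmem : x + y ∈ Submodule.span ℝ ({a, b} : Set X) := hab _ (by simp)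
        by_cases hLv : InnerProductGeometry.angle (t₃.getLastD z) (x + y) = π
        · by_cases hvz : InnerProductGeometry.angle (x + y) z = π
          · have Enew' := Enew
            rw [chain_cons_cons, List.getLastD_cons] at Enew'
            have hchain0 : chain (z :: t₃) = 0 := by linarith
            have hpar := chain_eq_zero z t₃
              (fun p hp => hnz p (List.mem_cons_of_mem _ (List.mem_cons_of_mem _ hp))) hchain0
            obtain ⟨-, r, hr, hzr⟩ := angle_eq_pi_iff.1 hvz
            refine ⟨x + y, x, ?_⟩
            intro p hp
            rcases List.mem_cons.1 hp with h1 | hp'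
            · rw [h1]; exact Submodule.subset_span (by simp)
            rcases List.mem_cons.1 hp' with h2 | hp''
            · have hy2 : p = (x + y) - x := by rw [h2]; abel
              rw [hy2]
              exact Submodule.sub_mem _ (Submodule.subset_span (by simp))
                (Submodule.subset_span (by simp))
            · obtain ⟨c, hc⟩ := hpar p hp''
              rw [hc, hzr, smul_smul]
              exact Submodule.smul_mem _ _ (Submodule.subset_span (by simp))
          · have hvzlt : InnerProductGeometry.angle (x + y) z < π :=
              lt_of_le_of_ne (angle_le_pi _ _) hvz
            have hymem0 := between_of_angle_add hv hy0 hz0 E1 hvzlt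
            have hsub : Submodule.span ℝ ({x + y, z} : Set X)
                ≤ Submodule.span ℝ ({a, b} : Set X) := by
              rw [Submodule.span_le]
              rintro q hq
              simp only [Set.mem_insert_iff, Set.mem_singleton_iff] at hq
              rcases hq with h | h
              · rw [h]; exact hvmem
              · rw [h]; exact hab z (by simp)
            have hymem : y ∈ Submodule.span ℝ ({a, b} : Set X) := hsub hymem0
            refine ⟨a, b, ?_⟩
            intro p hp
            rcases List.mem_cons.1 hp with h1 | hp'
            · have hx2 : p = (x + y) - y := by rw [h1]; abel
              rw [hx2]
              exact Submodule.sub_mem _ hvmem hymem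
            rcases List.mem_cons.1 hp' with h2 | hp''
            · rw [h2]; exact hymem
            · exact hab p (List.mem_cons_of_mem _ hp'')
        · have hLvlt : InnerProductGeometry.angle (t₃.getLastD z) (x + y) < π :=
            lt_of_le_of_ne (angle_le_pi _ _) hLv
          have hxmem0 := between_of_angle_add hL0 hx0 hv E2 hLvlt
          have hsub : Submodule.span ℝ ({t₃.getLastD z, x + y} : Set X)
              ≤ Submodule.span ℝ ({a, b} : Set X) := by
            rw [Submodule.span_le]
            rintro q hq
            simp only [Set.mem_insert_iff, Set.mem_singleton_iff] at hq
            rcases hq with h | h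
            · rw [h]; exact hab _ (List.mem_cons_of_mem _ (List.getLastD_mem_cons (l := t₃) (a := z)))
            · rw [h]; exact hvmem
          have hxmem : x ∈ Submodule.span ℝ ({a, b} : Set X) := hsub hxmem0
          have hymem : y ∈ Submodule.span ℝ ({a, b} : Set X) := by
            have hy2 : y = (x + y) - x := by abel
            rw [hy2]
            exact Submodule.sub_mem _ hvmem hxmem
          refine ⟨a, b, ?_⟩
          intro p hp
          rcases List.mem_cons.1 hp with h1 | hp'
          · rw [h1]; exact hxmem
          rcases List.mem_cons.1 hp' with h2 | hp''
          · rw [h2]; exact hymem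
          · exact hab p (List.mem_cons_of_mem _ hp'')


noncomputable def seg (u : ℕ → X) : ℕ → ℕ → List X
  | _, 0 => []
  | k, m + 1 => u k :: seg u (k + 1) m

@[simp] lemma seg_zero (u : ℕ → X) (k : ℕ) : seg u k 0 = [] := by rw [seg]
@[simp] lemma seg_succ (u : ℕ → X) (k m : ℕ) :
    seg u k (m + 1) = u k :: seg u (k + 1) m := by rw [seg]

lemma seg_length (u : ℕ → X) : ∀ m k, (seg u k m).length = m := by
  intro m
  induction m with
  | zero => intro k; simp
  | succ m ihm => intro k; simp [ihm]

lemma seg_sum (u : ℕ → X) : ∀ m k, (seg u k m).sum = ∑ i ∈ Finset.range m, u (k + i) := by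
  intro m
  induction m with
  | zero => intro k; simp
  | succ m ihm =>
    intro k
    rw [seg_succ, List.sum_cons, ihm (k + 1), Finset.sum_range_succ']
    have hsame : ∀ i : ℕ, u (k + 1 + i) = u (k + (i + 1)) := fun i => by
      rw [show k + 1 + i = k + (i + 1) from by omega]
    simp only [hsame, Nat.add_zero]
    exact add_comm _ _

lemma seg_chain (u : ℕ → X) : ∀ m k, chain (seg u k (m + 1))
    = ∑ i ∈ Finset.range m, InnerProductGeometry.angle (u (k + i)) (u (k + i + 1)) := by
  intro m
  induction m with
  | zero => intro k; simp
  | succ m ihm =>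
    intro k
    rw [seg_succ, seg_succ, chain_cons_cons, ← seg_succ, ihm (k + 1),
      Finset.sum_range_succ']
    have hsame : ∀ i : ℕ, InnerProductGeometry.angle (u (k + 1 + i)) (u (k + 1 + i + 1))
        = InnerProductGeometry.angle (u (k + (i + 1))) (u (k + (i + 1) + 1)) := fun i => by
      rw [show k + 1 + i = k + (i + 1) from by omega]
    simp only [hsame, Nat.add_zero]
    exact add_comm _ _

lemma seg_getLastD (u : ℕ → X) : ∀ m k, (seg u (k + 1) m).getLastD (u k) = u (k + m) := by
  intro m
  induction m with
  | zero => intro k; simp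
  | succ m ihm =>
    intro k
    rw [seg_succ, List.getLastD_cons, ihm (k + 1)]
    congr 1
    omega

lemma seg_mem (u : ℕ → X) : ∀ m k (z : X), z ∈ seg u k m → ∃ i, i < m ∧ z = u (k + i) := by
  intro m
  induction m with
  | zero => intro k z hz; simp at hz
  | succ m ihm =>
    intro k z hz
    rw [seg_succ] at hz
    rcases List.mem_cons.1 hz with h | h
    · exact ⟨0, by omega, by simpa using h⟩
    · obtain ⟨i, hi, hzi⟩ := ihm (k + 1) z h
      exact ⟨i + 1, by omega, by rw [hzi]; congr 1; omega⟩

lemma seg_mem_of (u : ℕ → X) : ∀ m k i, i < m → u (k + i) ∈ seg u k m := by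
  intro m
  induction m with
  | zero => intro k i hi; omega
  | succ m ihm =>
    intro k i hi
    rw [seg_succ]
    rcases Nat.eq_zero_or_pos i with h0 | hpos
    · rw [h0]; simp
    · have := ihm (k + 1) (i - 1) (by omega)
      rw [show k + 1 + (i - 1) = k + i from by omega] at this
      exact List.mem_cons_of_mem _ this

end ClosedPolygonAux

open ClosedPolygonAux in
/-- **Lemma (equality case of the closed polygon angle sum).** If the sum of
the exterior angles `π − ∠ A_{i-1} A_i A_{i+1}` of a closed polygonal chain in a
finite-dimensional real inner product space equals `2π`, then all the points
lie in a common affine subspace whose direction has dimension at most 2. -/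
theorem closed_polygon_exterior_angle_sum_eq_two_pi_coplanar
    {X : Type*} [NormedAddCommGroup X] [InnerProductSpace ℝ X]
    [FiniteDimensional ℝ X]
    (n : ℕ) (hn : 2 ≤ n) (A : ℕ → X)
    (hper : ∀ i, A (i + n) = A i)
    (hne : ∀ i, A i ≠ A (i + 1))
    (heq : ∑ i ∈ Finset.range n,
      (π - EuclideanGeometry.angle (A i) (A (i + 1)) (A (i + 2))) = 2 * π) :
    ∃ s : AffineSubspace ℝ X, Module.finrank ℝ s.direction ≤ 2 ∧ ∀ i, A i ∈ s := by
  classical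
  set u : ℕ → X := fun i => A (i + 1) - A i with hu
  have hu0 : ∀ i, u i ≠ 0 := fun i => sub_ne_zero.2 (Ne.symm (hne i))
  have huper : ∀ i, u (i + n) = u i := by
    intro i
    simp only [hu]
    rw [show i + n + 1 = (i + 1) + n from by ring, hper, hper]
  have huq : ∀ q r, u (r + q * n) = u r := by
    intro q
    induction q with
    | zero => simp
    | succ q ihq =>
      intro r
      rw [show r + (q + 1) * n = r + q * n + n from by ring, huper, ihq]
  have humod : ∀ i, u i = u (i % n) := by
    intro i
    conv_lhs => rw [show i = i % n + (i / n) * n from by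
      rw [Nat.mul_comm]; exact (Nat.mod_add_div i n).symm]
    exact huq (i / n) (i % n)
  have hsum0 : ∑ i ∈ Finset.range n, u i = 0 := by
    have h1 : ∑ i ∈ Finset.range n, (A (i + 1) - A i) = A n - A 0 :=
      Finset.sum_range_sub A n
    have h2 : A n = A 0 := by have := hper 0; rwa [Nat.zero_add] at this
    simp only [hu]
    rw [h1, h2, sub_self]
  have hang : ∀ i : ℕ, π - EuclideanGeometry.angle (A i) (A (i + 1)) (A (i + 2))
      = InnerProductGeometry.angle (u i) (u (i + 1)) := by
    intro i
    have h1 : EuclideanGeometry.angle (A i) (A (i + 1)) (A (i + 2))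
        = InnerProductGeometry.angle (A i - A (i + 1)) (A (i + 2) - A (i + 1)) := rfl
    have h2 : A i - A (i + 1) = -u i := by
      simp only [hu]
      exact (neg_sub _ _).symm
    have h3 : A (i + 2) - A (i + 1) = u (i + 1) := by simp only [hu]
    rw [h1, h2, h3, InnerProductGeometry.angle_neg_left]
    ring
  have heq' : ∑ i ∈ Finset.range n,
      InnerProductGeometry.angle (u i) (u (i + 1)) = 2 * π := by
    rw [← heq]
    exact Finset.sum_congr rfl (fun i _ => (hang i).symm)
  obtain ⟨m, hm⟩ : ∃ m, n = m + 1 := ⟨n - 1, by omega⟩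
  have hlen : (u 0 :: seg u 1 m).length = n := by
    simp [seg_length]; omega
  have hnz : ∀ z ∈ u 0 :: seg u 1 m, z ≠ 0 := by
    intro z hz
    rcases List.mem_cons.1 hz with h | h
    · rw [h]; exact hu0 0
    · obtain ⟨i, -, hzi⟩ := seg_mem u m 1 z h
      rw [hzi]; exact hu0 _
  have hsuml : (u 0 :: seg u 1 m).sum = 0 := by
    rw [List.sum_cons, seg_sum]
    rw [hm, Finset.sum_range_succ'] at hsum0
    rw [add_comm]
    rw [← hsum0]
    congr 1
    exact Finset.sum_congr rfl (fun i _ => by congr 1; omega)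
  have heql : chain (u 0 :: seg u 1 m)
      + InnerProductGeometry.angle ((seg u 1 m).getLastD (u 0)) (u 0) = 2 * π := by
    have hc : chain (u 0 :: seg u 1 m)
        = ∑ i ∈ Finset.range m, InnerProductGeometry.angle (u i) (u (i + 1)) := by
      have h1 := seg_chain u m 0
      rw [seg_succ] at h1
      simpa using h1
    have hgl : (seg u 1 m).getLastD (u 0) = u m := by
      have := seg_getLastD u m 0
      simpa using this
    have hwrap : u (m + 1) = u 0 := by
      have := huper 0
      rwa [Nat.zero_add, hm] at this
    rw [hc, hgl, show InnerProductGeometry.angle (u m) (u 0)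
        = InnerProductGeometry.angle (u m) (u (m + 1)) from by rw [hwrap],
      ← Finset.sum_range_succ, ← hm]
    exact heq'
  obtain ⟨a, b, hab⟩ := fenchel_eq n (u 0) (seg u 1 m) hlen hn hnz hsuml heql
  have humem : ∀ i, u i ∈ Submodule.span ℝ ({a, b} : Set X) := by
    intro i
    rw [humod i]
    have hin : i % n < n := Nat.mod_lt _ (by omega)
    rcases Nat.eq_zero_or_pos (i % n) with h0 | hpos
    · rw [h0]; exact hab (u 0) (by simp)
    · have hmem : u (i % n) ∈ seg u 1 m := by
        have := seg_mem_of u m 1 (i % n - 1) (by omega)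
        rwa [show 1 + (i % n - 1) = i % n from by omega] at this
      exact hab _ (List.mem_cons_of_mem _ hmem)
  refine ⟨AffineSubspace.mk' (A 0) (Submodule.span ℝ ({a, b} : Set X)), ?_, ?_⟩
  · rw [AffineSubspace.direction_mk']
    have h1 := finrank_span_finset_le_card (R := ℝ) ({a, b} : Finset X)
    have h2 : (({a, b} : Finset X) : Set X) = ({a, b} : Set X) := by simp
    rw [h2] at h1
    have h3 : ({a, b} : Finset X).card ≤ 2 := by
      apply le_trans (Finset.card_insert_le _ _)
      simp
    exact le_trans h1 h3
  · intro i
    rw [AffineSubspace.mem_mk']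
    have hvs : A i -ᵥ A 0 = ∑ k ∈ Finset.range i, u k := by
      rw [vsub_eq_sub]
      simp only [hu]
      rw [Finset.sum_range_sub A i]
    rw [hvs]
    exact Submodule.sum_mem _ (fun k _ => humem k)
end

section
/- Let d ≥ 2 and let A, B, C be points in ℝ^d with A ≠ B and C ≠ B. Let σ be the uniform probability measure on the unit sphere S^{d-1} ⊂ ℝ^d. Then σ({u ∈ S^{d-1} : ⟨u, B⟩ ≥ ⟨u, A⟩ and ⟨u, B⟩ ≥ ⟨u, C⟩}) = (π − ∠ABC)/(2π), where ∠ABC is the unsigned angle in [0, π] between A − B and C − B. -/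
open Real EuclideanGeometry MeasureTheory Metric Module

variable {d : ℕ}

local notation "E" => EuclideanSpace ℝ (Fin d)





lemma norm_combo (u v : E) (hu : ‖u‖ = 1) (hv : ‖v‖ = 1) (huv : (inner ℝ u v : ℝ) = 0)
    (c s : ℝ) (h : c ^ 2 + s ^ 2 = 1) : ‖c • u + s • v‖ = 1 := by
  have hvu : (inner ℝ v u : ℝ) = 0 := by rwa [real_inner_comm]
  have h1 : (inner ℝ u u : ℝ) = 1 := by rw [real_inner_self_eq_norm_sq, hu]; norm_num
  have h2 : (inner ℝ v v : ℝ) = 1 := by rw [real_inner_self_eq_norm_sq, hv]; norm_num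
  have : (inner ℝ (c • u + s • v) (c • u + s • v) : ℝ) = 1 := by
    simp only [inner_add_left, inner_add_right, real_inner_smul_left, real_inner_smul_right,
      h1, h2, huv, hvu]
    nlinarith
  have h3 : ‖c • u + s • v‖ ^ 2 = 1 := by rw [← real_inner_self_eq_norm_sq, this]
  nlinarith [norm_nonneg (c • u + s • v)]

lemma inner_combo (u v : E) (hu : ‖u‖ = 1) (hv : ‖v‖ = 1) (huv : (inner ℝ u v : ℝ) = 0)
    (c s c' s' : ℝ) :
    (inner ℝ (c • u + s • v) (c' • u + s' • v) : ℝ) = c * c' + s * s' := by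
  have hvu : (inner ℝ v u : ℝ) = 0 := by rwa [real_inner_comm]
  have h1 : (inner ℝ u u : ℝ) = 1 := by rw [real_inner_self_eq_norm_sq, hu]; norm_num
  have h2 : (inner ℝ v v : ℝ) = 1 := by rw [real_inner_self_eq_norm_sq, hv]; norm_num
  simp only [inner_add_left, inner_add_right, real_inner_smul_left, real_inner_smul_right,
    h1, h2, huv, hvu]
  ring


/-- transitivity of the orthogonal group on orthonormal pairs -/
lemma exists_isometry_pair (hd : 2 ≤ d) (e₁ e₂ f₁ f₂ : E)
    (he₁ : ‖e₁‖ = 1) (he₂ : ‖e₂‖ = 1) (he : (inner ℝ e₁ e₂ : ℝ) = 0)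
    (hf₁ : ‖f₁‖ = 1) (hf₂ : ‖f₂‖ = 1) (hf : (inner ℝ f₁ f₂ : ℝ) = 0) :
    ∃ g : E ≃ₗᵢ[ℝ] E, g e₁ = f₁ ∧ g e₂ = f₂ := by
  set i0 : Fin d := ⟨0, by omega⟩ with hi0
  set i1 : Fin d := ⟨1, by omega⟩ with hi1
  have h01 : i0 ≠ i1 := by simp [hi0, hi1, Fin.ext_iff]
  have card : Module.finrank ℝ (EuclideanSpace ℝ (Fin d)) = Fintype.card (Fin d) := by
    simp [finrank_euclideanSpace]
  have key : ∀ a b : E, ‖a‖ = 1 → ‖b‖ = 1 → (inner ℝ a b : ℝ) = 0 →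
      ∃ b' : OrthonormalBasis (Fin d) ℝ E, b' i0 = a ∧ b' i1 = b := by
    intro a b ha hb hab
    classical
    set v : Fin d → E := fun i => if i = i0 then a else if i = i1 then b else 0 with hv
    have hon : Orthonormal ℝ (({i0, i1} : Set (Fin d)).restrict v) := by
      rw [orthonormal_iff_ite]
      rintro ⟨i, hi⟩ ⟨j, hj⟩
      simp only [Set.mem_insert_iff, Set.mem_singleton_iff] at hi hj
      have hnorm : ∀ x : E, ‖x‖ = 1 → (inner ℝ x x : ℝ) = 1 := by
        intro x hx
        rw [real_inner_self_eq_norm_sq, hx]; norm_num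
      rcases hi with rfl | rfl <;> rcases hj with rfl | rfl <;>
        simp [Set.restrict, hv, h01, h01.symm, Subtype.ext_iff, hnorm a ha, hnorm b hb, hab,
          real_inner_comm a b, ha, hb]
    obtain ⟨b', hb'⟩ := hon.exists_orthonormalBasis_extension_of_card_eq card
    exact ⟨b', by simpa [hv] using hb' i0 (by simp), by simpa [hv, h01.symm] using hb' i1 (by simp)⟩
  obtain ⟨be, hbe0, hbe1⟩ := key e₁ e₂ he₁ he₂ he
  obtain ⟨bf, hbf0, hbf1⟩ := key f₁ f₂ hf₁ hf₂ hf
  refine ⟨be.repr.trans bf.repr.symm, ?_, ?_⟩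
  · have h : be.repr e₁ = EuclideanSpace.single i0 1 := by
      rw [← hbe0]; simp [OrthonormalBasis.repr_self]
    simp [LinearIsometryEquiv.trans_apply, h, ← hbf0, OrthonormalBasis.repr_symm_single]
  · have h : be.repr e₂ = EuclideanSpace.single i1 1 := by
      rw [← hbe1]; simp [OrthonormalBasis.repr_self]
    simp [LinearIsometryEquiv.trans_apply, h, ← hbf1, OrthonormalBasis.repr_symm_single]


lemma null_submodule
    (hd : 2 ≤ d)
    (σ : Measure (EuclideanSpace ℝ (Fin d))) [IsProbabilityMeasure σ]
    (hsupp : σ (sphere (0 : EuclideanSpace ℝ (Fin d)) 1)ᶜ = 0)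
    (hinv : ∀ g : EuclideanSpace ℝ (Fin d) ≃ₗᵢ[ℝ] EuclideanSpace ℝ (Fin d),
      Measure.map g σ = σ)
    (U : Submodule ℝ (EuclideanSpace ℝ (Fin d))) (hU : U ≠ ⊤) : σ U = 0 := by
  suffices H : ∀ k : ℕ, ∀ U : Submodule ℝ (EuclideanSpace ℝ (Fin d)), U ≠ ⊤ →
      finrank ℝ U ≤ k → σ U = 0 by
    exact H (finrank ℝ U) U hU le_rfl
  intro k
  induction k with
  | zero =>
    intro U hU hr
    have : U = ⊥ := by rw [← Submodule.finrank_eq_zero]; omega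
    subst this
    refine measure_mono_null ?_ hsupp
    intro x hx
    simp only [Submodule.bot_coe, Set.mem_singleton_iff] at hx
    subst hx
    simp [mem_sphere_zero_iff_norm]
  | succ k IH =>
    intro U hU hr
    rcases Nat.lt_or_ge (finrank ℝ U) (k+1) with hlt | hge
    · exact IH U hU (by omega)
    have hrk : finrank ℝ U = k + 1 := le_antisymm hr hge
    -- pick a unit vector u₀ in U and a unit vector v in Uᗮ
    have hUbot : U ≠ ⊥ := by
      intro h; rw [h] at hrk; simp at hrk
    obtain ⟨x, hxU, hx0⟩ := Submodule.exists_mem_ne_zero_of_ne_bot hUbot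
    set u₀ : EuclideanSpace ℝ (Fin d) := ‖x‖⁻¹ • x with hu₀def
    have hu₀U : u₀ ∈ U := U.smul_mem _ hxU
    have hu₀ : ‖u₀‖ = 1 := by
      rw [hu₀def, norm_smul, norm_inv, norm_norm]
      field_simp [norm_ne_zero_iff.mpr hx0]
    have hUort : Uᗮ ≠ ⊥ := fun h => hU (Submodule.orthogonal_eq_bot_iff.mp h)
    obtain ⟨y, hyU, hy0⟩ := Submodule.exists_mem_ne_zero_of_ne_bot hUort
    set v : EuclideanSpace ℝ (Fin d) := ‖y‖⁻¹ • y with hvdef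
    have hvU : v ∈ Uᗮ := Uᗮ.smul_mem _ hyU
    have hv : ‖v‖ = 1 := by
      rw [hvdef, norm_smul, norm_inv, norm_norm]
      field_simp [norm_ne_zero_iff.mpr hy0]
    have huv : (inner ℝ u₀ v : ℝ) = 0 := hvU u₀ hu₀U
    -- the angles
    set θ : ℕ → ℝ := fun n => π / (2 * (n + 2)) with hθdef
    have hθpos : ∀ n, 0 < θ n := by
      intro n; apply div_pos pi_pos; positivity
    have hθlt : ∀ n, θ n < π / 2 := by
      intro n
      rw [hθdef]
      rw [div_lt_div_iff₀ (by positivity) (by norm_num)]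
      have : (2:ℝ) < 2 * (n+2) := by nlinarith
      nlinarith [pi_pos]
    have hθanti : ∀ n m : ℕ, n < m → θ m < θ n := by
      intro n m h
      apply div_lt_div_of_pos_left pi_pos (by positivity)
      have : (n:ℝ) < m := by exact_mod_cast h
      nlinarith
    -- vectors and isometries
    set a : ℕ → EuclideanSpace ℝ (Fin d) := fun n => cos (θ n) • u₀ + sin (θ n) • v with hadef
    set b : ℕ → EuclideanSpace ℝ (Fin d) :=
      fun n => (-sin (θ n)) • u₀ + cos (θ n) • v with hbdef
    have ha1 : ∀ n, ‖a n‖ = 1 := fun n =>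
      norm_combo u₀ v hu₀ hv huv _ _ (by rw [← sin_sq_add_cos_sq (θ n)]; ring)
    have hb1 : ∀ n, ‖b n‖ = 1 := fun n =>
      norm_combo u₀ v hu₀ hv huv _ _ (by rw [← sin_sq_add_cos_sq (θ n)]; ring)
    have haeq : ∀ n, a n = cos (θ n) • u₀ + sin (θ n) • v := fun n => rfl
    have hbeq : ∀ n, b n = (-sin (θ n)) • u₀ + cos (θ n) • v := fun n => rfl
    have hab : ∀ n, (inner ℝ (a n) (b n) : ℝ) = 0 := by
      intro n; rw [haeq, hbeq, inner_combo u₀ v hu₀ hv huv]; ring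
    have hg : ∀ n : ℕ, ∃ g : EuclideanSpace ℝ (Fin d) ≃ₗᵢ[ℝ] EuclideanSpace ℝ (Fin d),
        g u₀ = a n ∧ g v = b n := by
      intro n
      exact exists_isometry_pair hd u₀ v (a n) (b n) hu₀ hv huv (ha1 n) (hb1 n) (hab n)
    choose g hgu hgv using hg
    set V : ℕ → Submodule ℝ (EuclideanSpace ℝ (Fin d)) :=
      fun n => U.map ((g n).toLinearEquiv : _ →ₗ[ℝ] _) with hVdef
    have hVset : ∀ n, (V n : Set (EuclideanSpace ℝ (Fin d))) = (g n) '' U := by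
      intro n; ext z; simp [hVdef, Submodule.mem_map]
    have hVmeas : ∀ n, MeasurableSet (V n : Set (EuclideanSpace ℝ (Fin d))) :=
      fun n => (V n).closed_of_finiteDimensional.measurableSet
    have hVσ : ∀ n, σ (V n) = σ U := by
      intro n
      have hmeas : Measurable (g n) := (g n).continuous.measurable
      have : σ (V n : Set _) = (Measure.map (g n) σ) (V n : Set _) := by rw [hinv]
      rw [this, Measure.map_apply hmeas (hVmeas n), hVset n,
        Set.preimage_image_eq _ (g n).injective]
    have hVrank : ∀ n, finrank ℝ (V n) = k + 1 := by
      intro n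
      rw [hVdef]
      rw [LinearEquiv.finrank_map_eq]
      exact hrk
    have hVtop : ∀ n, V n ≠ ⊤ := by
      intro n h
      have h2 : finrank ℝ (V n) = d := by
        rw [h, finrank_top, finrank_euclideanSpace]; simp
      have h1 : finrank ℝ U < finrank ℝ (EuclideanSpace ℝ (Fin d)) :=
        Submodule.finrank_lt hU
      rw [finrank_euclideanSpace, Fintype.card_fin] at h1
      rw [hVrank n] at h2
      omega
    -- distinctness
    have hdist : ∀ n m : ℕ, θ n < θ m → V n ≠ V m := by
      intro n m hnm hVeq
      set Δ : ℝ := θ m - θ n with hΔdef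
      have hΔpos : 0 < Δ := by simp [hΔdef]; linarith
      have hΔlt : Δ < π := by
        have := hθlt m; have := hθpos n
        have hπ := pi_pos
        simp only [hΔdef]; linarith
      have hsΔ : 0 < sin Δ := sin_pos_of_pos_of_lt_pi hΔpos hΔlt
      have hm : θ m = θ n + Δ := by rw [hΔdef]; ring
      have hkey : sin Δ • b n = a m - cos Δ • a n := by
        rw [haeq, haeq, hbeq, hm, cos_add, sin_add]
        module
      have haV : ∀ p : ℕ, a p ∈ V p := by
        intro p
        rw [← hgu p]
        exact Submodule.mem_map_of_mem hu₀U
      have hanV : a n ∈ V n := haV n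
      have hamV : a m ∈ V n := by rw [hVeq]; exact haV m
      have hbV : b n ∈ V n := by
        have h1 : sin Δ • b n ∈ V n := by
          rw [hkey]
          exact Submodule.sub_mem _ hamV (Submodule.smul_mem _ _ hanV)
        have h2 := Submodule.smul_mem _ (sin Δ)⁻¹ h1
        rwa [smul_smul, inv_mul_cancel₀ (ne_of_gt hsΔ), one_smul] at h2
      have hbperp : (inner ℝ (b n) (b n) : ℝ) = 0 := by
        obtain ⟨w, hwU, hw⟩ := Submodule.mem_map.mp hbV
        have : (inner ℝ (b n) (b n) : ℝ) = inner ℝ (g n v) (g n w) := by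
          rw [hgv n]
          congr 1
          exact hw.symm
        rw [this, (g n).inner_map_map, real_inner_comm]
        exact (hvU w hwU)
      have hb0 : b n = 0 := by
        rwa [real_inner_self_eq_norm_sq, pow_eq_zero_iff (by norm_num), norm_eq_zero] at hbperp
      have h5 := hb1 n
      rw [hb0, norm_zero] at h5
      norm_num at h5
    have hdist' : ∀ n m : ℕ, n ≠ m → V n ≠ V m := by
      intro n m hnm
      rcases Nat.lt_or_ge n m with h | h
      · exact fun he => hdist m n (hθanti n m h) he.symm
      · have : m < n := by omega
        exact hdist n m (hθanti m n this)
    -- pairwise intersections are null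
    have hinter : ∀ n m : ℕ, n ≠ m → σ ((V n : Set _) ∩ (V m : Set _)) = 0 := by
      intro n m hnm
      have h1 : V n ⊓ V m ≠ ⊤ := by
        intro h
        exact hVtop n (top_le_iff.mp (h ▸ inf_le_left))
      have h2 : V n ⊓ V m < V n := by
        rcases lt_or_eq_of_le (inf_le_left : V n ⊓ V m ≤ V n) with h | h
        · exact h
        · exfalso
          apply hdist' n m hnm
          apply Submodule.eq_of_le_of_finrank_le (h ▸ inf_le_right)
          rw [hVrank, hVrank]
      have h3 : finrank ℝ (V n ⊓ V m : Submodule ℝ _) ≤ k := by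
        have := Submodule.finrank_lt_finrank_of_lt h2
        rw [hVrank] at this
        omega
      have := IH _ h1 h3
      rwa [Submodule.coe_inf] at this
    -- disjointified sets
    set W : ℕ → Set (EuclideanSpace ℝ (Fin d)) :=
      fun n => (V n : Set _) \ (⋃ m ∈ Finset.range n, (V m : Set _)) with hWdef
    have hWmeas : ∀ n, MeasurableSet (W n) := by
      intro n
      exact (hVmeas n).diff (Finset.measurableSet_biUnion _ fun m _ => hVmeas m)
    have hWd : ∀ {n m : ℕ}, n < m → Disjoint (W n) (W m) := by
      intro n m h
      rw [Set.disjoint_left]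
      intro z hzn hzm
      exact hzm.2 (Set.mem_biUnion (Finset.mem_range.mpr h) hzn.1)
    have hWdisj : Pairwise (Function.onFun Disjoint W) := by
      intro n m hnm
      rcases Nat.lt_or_ge n m with h | h
      · exact hWd h
      · exact (hWd (by omega : m < n)).symm
    have hWσ : ∀ n, σ (W n) = σ U := by
      intro n
      have hsub : (V n : Set _) \ W n ⊆ ⋃ m ∈ Finset.range n, ((V n : Set _) ∩ (V m : Set _)) := by
        intro z hz
        rcases hz with ⟨hz1, hz2⟩
        rw [hWdef] at hz2
        simp only [Set.mem_diff, not_and, not_not] at hz2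
        have := hz2 hz1
        rcases Set.mem_iUnion₂.mp this with ⟨m, hm, hzm⟩
        exact Set.mem_iUnion₂.mpr ⟨m, hm, ⟨hz1, hzm⟩⟩
      have hnull : σ ((V n : Set _) \ W n) = 0 := by
        refine measure_mono_null hsub ?_
        refine measure_biUnion_null_iff (Finset.range n).countable_toSet |>.mpr ?_
        intro m hm
        simp only [Finset.coe_range, Set.mem_Iio] at hm
        exact hinter n m (by omega)
      have h1 : σ (V n : Set _) ≤ σ (W n) + σ ((V n : Set _) \ W n) := by
        rw [hWdef]
        exact (measure_mono (by intro z hz; by_cases hzW : z ∈ (⋃ m ∈ Finset.range n, (V m : Set _)) <;> simp [hz, hzW])).trans (measure_union_le _ _)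
      rw [hnull, add_zero] at h1
      have h2 : σ (W n) ≤ σ (V n : Set _) := measure_mono Set.diff_subset
      have := le_antisymm h2 h1
      rw [this, hVσ n]
    -- sum up
    by_contra hσU
    have hsum : ∑' n : ℕ, σ (W n) = σ (⋃ n, W n) := (measure_iUnion hWdisj hWmeas).symm
    have h1 : (⊤ : ENNReal) ≤ 1 := by
      calc (⊤ : ENNReal) = ∑' _ : ℕ, σ U := (ENNReal.tsum_const_eq_top_of_ne_zero hσU).symm
      _ = ∑' n, σ (W n) := by simp_rw [hWσ]
      _ = σ (⋃ n, W n) := hsum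
      _ ≤ σ Set.univ := measure_mono (Set.subset_univ _)
      _ = 1 := measure_univ
    simp at h1

lemma claimA' (α θ a b : ℝ) (h0 : 0 ≤ α) (h1 : α ≤ θ) (h2 : θ ≤ π) (ha : 0 < a)
    (hz : cos α * a + sin α * b < 0) : cos θ * a + sin θ * b ≤ 0 := by
  by_cases hα0 : α = 0
  · subst hα0; simp at hz; linarith
  by_cases hαπ : α = π
  · have hθπ : θ = π := le_antisymm h2 (hαπ ▸ h1)
    subst hθπ; simp; linarith
  have hsα : 0 < sin α :=
    sin_pos_of_pos_of_lt_pi (lt_of_le_of_ne h0 (Ne.symm hα0))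
      (lt_of_le_of_ne (by linarith) hαπ)
  have hid : sin α * (cos θ * a + sin θ * b)
      = sin θ * (cos α * a + sin α * b) - a * sin (θ - α) := by
    rw [sin_sub]; ring
  have hsθ : 0 ≤ sin θ := sin_nonneg_of_nonneg_of_le_pi (by linarith) h2
  have hsd : 0 ≤ sin (θ - α) := sin_nonneg_of_nonneg_of_le_pi (by linarith) (by linarith)
  nlinarith

lemma claimB' (α θ a b : ℝ) (h0 : 0 ≤ α) (h1 : α ≤ θ) (h2 : θ ≤ π)
    (hz : 0 < cos α * a + sin α * b) (hy : cos θ * a + sin θ * b < 0) : 0 ≤ a := by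
  rcases eq_or_lt_of_le h1 with he | hlt
  · exfalso; rw [he] at hz; linarith
  rcases lt_or_eq_of_le (show θ - α ≤ π by linarith) with h4 | h4
  · have hs : 0 < sin (θ - α) := sin_pos_of_pos_of_lt_pi (by linarith) h4
    have hid : sin (θ - α) * a
        = sin θ * (cos α * a + sin α * b) - sin α * (cos θ * a + sin θ * b) := by
      rw [sin_sub]; ring
    have hsθ : 0 ≤ sin θ := sin_nonneg_of_nonneg_of_le_pi (by linarith) h2
    have hsα : 0 ≤ sin α := sin_nonneg_of_nonneg_of_le_pi h0 (by linarith)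
    nlinarith
  · have hα : α = 0 := by linarith
    subst hα; simp at hz; linarith

lemma linear_of_additive (F : ℝ → ℝ)
    (hadd : ∀ α θ, 0 ≤ α → α ≤ θ → θ ≤ π → F θ = F α + F (θ - α))
    (hnn : ∀ θ, 0 ≤ θ → θ ≤ π → 0 ≤ F θ)
    (hpi : F π = 1 / 2) :
    ∀ θ, 0 ≤ θ → θ ≤ π → F θ = θ / (2 * π) := by
  have hπ := pi_pos
  have hmono : ∀ α θ, 0 ≤ α → α ≤ θ → θ ≤ π → F α ≤ F θ := by
    intro α θ ha hb hc
    have h1 := hadd α θ ha hb hc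
    have h2 := hnn (θ - α) (by linarith) (by linarith)
    linarith
  have hF0 : F 0 = 0 := by
    have := hadd 0 0 le_rfl le_rfl (le_of_lt hπ)
    simp at this
    linarith
  have hmul : ∀ (k : ℕ) (δ : ℝ), 0 ≤ δ → (k : ℝ) * δ ≤ π → F ((k : ℝ) * δ) = k * F δ := by
    intro k
    induction k with
    | zero => intro δ h0 h1; simp [hF0]
    | succ k IH =>
      intro δ h0 h1
      push_cast at h1 ⊢
      have hkδ : (k : ℝ) * δ ≤ π := by nlinarith
      have h2 := hadd ((k : ℝ) * δ) (((k : ℝ) + 1) * δ) (by positivity) (by nlinarith) h1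
      have h3 : ((k : ℝ) + 1) * δ - (k : ℝ) * δ = δ := by ring
      rw [h3] at h2
      have h4 := IH δ h0 hkδ
      rw [h2, h4]; ring
  have hbound : ∀ θ, 0 ≤ θ → θ ≤ π → ∀ n : ℕ, 1 ≤ n → |F θ - θ / (2 * π)| ≤ 1 / n := by
    intro θ hθ0 hθπ n hn
    have hn0 : (0 : ℝ) < n := by exact_mod_cast hn
    set δ : ℝ := π / n with hδdef
    have hδ0 : 0 < δ := by positivity
    set k : ℕ := ⌊θ / δ⌋₊ with hkdef
    have hk1 : (k : ℝ) ≤ θ / δ := Nat.floor_le (by positivity)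
    have hk2 : θ / δ < (k : ℝ) + 1 := Nat.lt_floor_add_one _
    have hkn : (k : ℝ) ≤ n := by
      have : θ / δ ≤ n := by
        rw [div_le_iff₀ hδ0, hδdef]
        field_simp
        exact hθπ
      linarith
    have hnδ : (n : ℝ) * δ = π := by rw [hδdef]; field_simp
    have hFδ : F δ = 1 / (2 * n) := by
      have := hmul n δ (le_of_lt hδ0) (le_of_eq hnδ)
      rw [hnδ, hpi] at this
      field_simp at this ⊢
      linarith
    have hlow : (k : ℝ) / (2 * n) ≤ F θ := by
      have hkδθ : (k : ℝ) * δ ≤ θ := by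
        rw [← le_div_iff₀ hδ0]; exact hk1
      have := hmono ((k : ℝ) * δ) θ (by positivity) hkδθ hθπ
      rw [hmul k δ (le_of_lt hδ0) (by linarith), hFδ] at this
      calc (k : ℝ) / (2 * n) = k * (1 / (2 * n)) := by ring
      _ ≤ F θ := this
    have hhigh : F θ ≤ ((k : ℝ) + 1) / (2 * n) := by
      rcases le_or_gt ((k : ℝ) + 1) n with h | h
      · have hθk : θ ≤ ((k : ℝ) + 1) * δ := by
          rw [← div_le_iff₀ hδ0]; linarith
        have hk1δ : ((k : ℝ) + 1) * δ ≤ π := by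
          rw [← hnδ]; nlinarith
        have := hmono θ (((k : ℝ) + 1) * δ) hθ0 hθk hk1δ
        have he : ((k : ℝ) + 1) * δ = ((k + 1 : ℕ) : ℝ) * δ := by push_cast; ring
        rw [he, hmul (k + 1) δ (le_of_lt hδ0) (by rw [← he]; exact hk1δ), hFδ] at this
        calc F θ ≤ ((k + 1 : ℕ) : ℝ) * (1 / (2 * n)) := this
        _ = ((k : ℝ) + 1) / (2 * n) := by push_cast; ring
      · have h5 := hmono θ π hθ0 hθπ le_rfl
        rw [hpi] at h5
        have h6 : (1 : ℝ) / 2 ≤ ((k : ℝ) + 1) / (2 * n) := by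
          rw [div_le_div_iff₀ (by norm_num) (by positivity)]
          nlinarith
        linarith
    have hmid1 : (k : ℝ) / (2 * n) ≤ θ / (2 * π) := by
      have he : θ / (2 * π) = (θ / δ) / (2 * n) := by
        rw [hδdef]; field_simp
      rw [he]; gcongr
    have hmid2 : θ / (2 * π) ≤ ((k : ℝ) + 1) / (2 * n) := by
      have he : θ / (2 * π) = (θ / δ) / (2 * n) := by
        rw [hδdef]; field_simp
      rw [he]; gcongr
    rw [abs_le]
    constructor
    · have : (1 : ℝ) / (2 * n) ≤ 1 / n := by gcongr <;> linarith
      have hd : ((k : ℝ) + 1) / (2 * n) - (k : ℝ) / (2 * n) = 1 / (2 * n) := by ring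
      nlinarith
    · have : (1 : ℝ) / (2 * n) ≤ 1 / n := by gcongr <;> linarith
      have hd : ((k : ℝ) + 1) / (2 * n) - (k : ℝ) / (2 * n) = 1 / (2 * n) := by ring
      nlinarith
  intro θ hθ0 hθπ
  have habs : |F θ - θ / (2 * π)| = 0 := by
    by_contra h
    have hpos : 0 < |F θ - θ / (2 * π)| := lt_of_le_of_ne (abs_nonneg _) (Ne.symm h)
    obtain ⟨n, hn⟩ := exists_nat_one_div_lt hpos
    have := hbound θ hθ0 hθπ (n + 1) (by omega)
    push_cast at this hn
    linarith
  have := abs_eq_zero.mp habs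
  linarith [sub_eq_zero.mp this]

/-- the "lune" between the half-space of `x` and the complement of that of `y` -/
def lune (x y : EuclideanSpace ℝ (Fin d)) : Set (EuclideanSpace ℝ (Fin d)) :=
  {u | 0 ≤ (inner ℝ u x : ℝ) ∧ (inner ℝ u y : ℝ) ≤ 0}

lemma measurableSet_inner_nonneg (x : E) : MeasurableSet {u : E | 0 ≤ (inner ℝ u x : ℝ)} := by
  have : IsClosed {u : E | 0 ≤ (inner ℝ u x : ℝ)} :=
    isClosed_le continuous_const (continuous_id.inner continuous_const)
  exact this.measurableSet

lemma measurableSet_lune (x y : E) : MeasurableSet (lune x y) := by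
  have h1 : IsClosed {u : E | 0 ≤ (inner ℝ u x : ℝ)} :=
    isClosed_le continuous_const (continuous_id.inner continuous_const)
  have h2 : IsClosed {u : E | (inner ℝ u y : ℝ) ≤ 0} :=
    isClosed_le (continuous_id.inner continuous_const) continuous_const
  exact (h1.inter h2).measurableSet

variable (σ : Measure (EuclideanSpace ℝ (Fin d))) [IsProbabilityMeasure σ]

lemma null_hyperplane
    (hd : 2 ≤ d)
    (hsupp : σ (sphere (0 : EuclideanSpace ℝ (Fin d)) 1)ᶜ = 0)
    (hinv : ∀ g : EuclideanSpace ℝ (Fin d) ≃ₗᵢ[ℝ] EuclideanSpace ℝ (Fin d),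
      Measure.map g σ = σ)
    (p : EuclideanSpace ℝ (Fin d)) (hp : p ≠ 0) :
    σ {u : EuclideanSpace ℝ (Fin d) | (inner ℝ u p : ℝ) = 0} = 0 := by
  have hset : {u : EuclideanSpace ℝ (Fin d) | (inner ℝ u p : ℝ) = 0}
      = ((ℝ ∙ p)ᗮ : Submodule ℝ (EuclideanSpace ℝ (Fin d))) := by
    ext u
    rw [Set.mem_setOf_eq, SetLike.mem_coe, Submodule.mem_orthogonal_singleton_iff_inner_right]
    rw [real_inner_comm]
  rw [hset]
  apply null_submodule hd σ hsupp hinv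
  intro h
  have : p ∈ (ℝ ∙ p)ᗮ := h ▸ Submodule.mem_top
  have h2 := this p (Submodule.mem_span_singleton_self p)
  rw [real_inner_self_eq_norm_sq] at h2
  exact hp (by simpa using h2)

lemma halfspace_measure
    (hd : 2 ≤ d)
    (hsupp : σ (sphere (0 : EuclideanSpace ℝ (Fin d)) 1)ᶜ = 0)
    (hinv : ∀ g : EuclideanSpace ℝ (Fin d) ≃ₗᵢ[ℝ] EuclideanSpace ℝ (Fin d),
      Measure.map g σ = σ)
    (p : EuclideanSpace ℝ (Fin d)) (hp : p ≠ 0) :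
    σ {u : EuclideanSpace ℝ (Fin d) | 0 ≤ (inner ℝ u p : ℝ)} = 1 / 2 := by
  set S : Set (EuclideanSpace ℝ (Fin d)) := {u | 0 ≤ (inner ℝ u p : ℝ)} with hS
  set S' : Set (EuclideanSpace ℝ (Fin d)) := {u | (inner ℝ u p : ℝ) ≤ 0} with hS'
  have hneg : (LinearIsometryEquiv.neg ℝ : EuclideanSpace ℝ (Fin d) ≃ₗᵢ[ℝ] EuclideanSpace ℝ (Fin d)) ⁻¹' S' = S := by
    ext u
    simp [hS, hS', inner_neg_left]
  have hσS' : σ S' = σ S := by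
    have hmeas : MeasurableSet S' :=
      (isClosed_le (continuous_id.inner continuous_const) continuous_const).measurableSet
    calc σ S' = (Measure.map (⇑(LinearIsometryEquiv.neg ℝ :
            EuclideanSpace ℝ (Fin d) ≃ₗᵢ[ℝ] EuclideanSpace ℝ (Fin d))) σ) S' := by
          rw [hinv]
      _ = σ ((LinearIsometryEquiv.neg ℝ :
            EuclideanSpace ℝ (Fin d) ≃ₗᵢ[ℝ] EuclideanSpace ℝ (Fin d)) ⁻¹' S') :=
          Measure.map_apply (LinearIsometryEquiv.neg ℝ :
            EuclideanSpace ℝ (Fin d) ≃ₗᵢ[ℝ]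
              EuclideanSpace ℝ (Fin d)).continuous.measurable hmeas
      _ = σ S := by rw [hneg]
  have hunion : S ∪ S' = Set.univ := by
    ext u; simp [hS, hS']; exact le_total 0 _
  have hinter : S ∩ S' = {u : EuclideanSpace ℝ (Fin d) | (inner ℝ u p : ℝ) = 0} := by
    ext u; simp [hS, hS']; constructor
    · rintro ⟨h1, h2⟩; linarith
    · intro h; constructor <;> linarith
  have hmeas' : MeasurableSet S' :=
    (isClosed_le (continuous_id.inner continuous_const) continuous_const).measurableSet
  have key : σ S + σ S' = 1 := by
    rw [← measure_union_add_inter S hmeas', hunion, hinter,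
      null_hyperplane σ hd hsupp hinv p hp, measure_univ, add_zero]
  rw [hσS'] at key
  have h2 : (2 : ENNReal) * σ S = 1 := by rw [two_mul]; exact key
  rw [ENNReal.eq_div_iff (by norm_num) (by norm_num)]
  exact h2

lemma lune_inv
    (hd : 2 ≤ d)
    (hsupp : σ (sphere (0 : EuclideanSpace ℝ (Fin d)) 1)ᶜ = 0)
    (hinv : ∀ g : EuclideanSpace ℝ (Fin d) ≃ₗᵢ[ℝ] EuclideanSpace ℝ (Fin d),
      Measure.map g σ = σ)
    (p q p' q' : EuclideanSpace ℝ (Fin d))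
    (hp : ‖p‖ = 1) (hq : ‖q‖ = 1) (hp' : ‖p'‖ = 1) (hq' : ‖q'‖ = 1)
    (hc : (inner ℝ p q : ℝ) = inner ℝ p' q') :
    σ (lune p q) = σ (lune p' q') := by
  set c : ℝ := inner ℝ p q with hcdef
  have hcabs : |c| ≤ 1 := by
    have := abs_real_inner_le_norm p q
    rwa [hp, hq, one_mul] at this
  -- helper for the generic case
  have main : ∀ x y x' y' : EuclideanSpace ℝ (Fin d), ‖x‖ = 1 → ‖y‖ = 1 → ‖x'‖ = 1 →
      ‖y'‖ = 1 → (inner ℝ x y : ℝ) = c → (inner ℝ x' y' : ℝ) = c → |c| < 1 →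
      σ (lune x y) = σ (lune x' y') := by
    intro x y x' y' hx hy hx' hy' hxy hxy' hlt
    have h1c : 0 < 1 - c ^ 2 := by
      have := abs_lt.mp hlt
      nlinarith
    set s : ℝ := Real.sqrt (1 - c ^ 2) with hsdef
    have hs : 0 < s := Real.sqrt_pos.mpr h1c
    have hs2 : s ^ 2 = 1 - c ^ 2 := Real.sq_sqrt h1c.le
    have wfact : ∀ a b : EuclideanSpace ℝ (Fin d), ‖a‖ = 1 → ‖b‖ = 1 → (inner ℝ a b : ℝ) = c →
        ∃ w, ‖w‖ = 1 ∧ (inner ℝ a w : ℝ) = 0 ∧ b = c • a + s • w := by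
      intro a b ha hb hab
      have haa : (inner ℝ a a : ℝ) = 1 := by rw [real_inner_self_eq_norm_sq, ha]; norm_num
      have hbb : (inner ℝ b b : ℝ) = 1 := by rw [real_inner_self_eq_norm_sq, hb]; norm_num
      have hba : (inner ℝ b a : ℝ) = c := by rw [real_inner_comm]; exact hab
      refine ⟨s⁻¹ • (b - c • a), ?_, ?_, ?_⟩
      · have hnorm2 : ‖b - c • a‖ ^ 2 = s ^ 2 := by
          rw [← real_inner_self_eq_norm_sq]
          simp only [inner_sub_left, inner_sub_right, real_inner_smul_left,
            real_inner_smul_right, haa, hbb, hab, hba]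
          rw [hs2]; ring
        have hnorm : ‖b - c • a‖ = s := by
          nlinarith [norm_nonneg (b - c • a)]
        rw [norm_smul, hnorm, norm_inv, Real.norm_eq_abs, abs_of_pos hs,
          inv_mul_cancel₀ hs.ne']
      · simp only [real_inner_smul_right, inner_sub_right, real_inner_smul_right, haa, hab]
        ring
      · rw [smul_smul, mul_inv_cancel₀ hs.ne', one_smul]
        abel
    obtain ⟨w, hw, hxw, hyw⟩ := wfact x y hx hy hxy
    obtain ⟨w', hw', hxw', hyw'⟩ := wfact x' y' hx' hy' hxy'
    obtain ⟨g, hgx, hgw⟩ := exists_isometry_pair hd x w x' w' hx hw hxw hx' hw' hxw'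
    have hgy : g y = y' := by
      rw [hyw, map_add, LinearIsometryEquiv.map_smul, LinearIsometryEquiv.map_smul,
        hgx, hgw, ← hyw']
    have hpre : (g : EuclideanSpace ℝ (Fin d) → EuclideanSpace ℝ (Fin d)) ⁻¹' lune x' y'
        = lune x y := by
      ext u
      simp only [Set.mem_preimage, lune, Set.mem_setOf_eq]
      rw [← hgx, ← hgy, (g : EuclideanSpace ℝ (Fin d) ≃ₗᵢ[ℝ]
        EuclideanSpace ℝ (Fin d)).inner_map_map, g.inner_map_map]
    calc σ (lune x y) = σ ((g : EuclideanSpace ℝ (Fin d) → EuclideanSpace ℝ (Fin d)) ⁻¹'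
          lune x' y') := by rw [hpre]
      _ = (Measure.map (⇑g) σ) (lune x' y') :=
          (Measure.map_apply g.continuous.measurable (measurableSet_lune x' y')).symm
      _ = σ (lune x' y') := by rw [hinv]
  rcases lt_or_eq_of_le hcabs with hlt | heq
  · exact main p q p' q' hp hq hp' hq' rfl hc.symm hlt
  · rcases abs_eq (by norm_num : (0:ℝ) ≤ 1) |>.mp heq with h1 | h1
    · -- c = 1 : q = p, q' = p', lunes are null
      have hqp : p = q := (inner_eq_one_iff_of_norm_eq_one hp hq).mp h1
      have hqp' : p' = q' := (inner_eq_one_iff_of_norm_eq_one hp' hq').mp (hc.symm.trans h1)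
      have hz : ∀ r : EuclideanSpace ℝ (Fin d), ‖r‖ = 1 → σ (lune r r) = 0 := by
        intro r hr
        refine measure_mono_null ?_ (null_hyperplane σ hd hsupp hinv r
          (fun h => by simp [h] at hr))
        intro u hu
        exact le_antisymm hu.2 hu.1
      rw [← hqp, ← hqp', hz p hp, hz p' hp']
    · -- c = -1 : q = -p, lunes are half-spaces
      have hqp : p = -q := by
        have h1' : (inner ℝ p q : ℝ) = -1 := h1
        have : (inner ℝ p (-q) : ℝ) = 1 := by rw [inner_neg_right, h1']; ring
        exact (inner_eq_one_iff_of_norm_eq_one hp (by rw [norm_neg]; exact hq)).mp this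
      have hqp' : p' = -q' := by
        have h1' : (inner ℝ p' q' : ℝ) = -1 := hc.symm.trans h1
        have : (inner ℝ p' (-q') : ℝ) = 1 := by rw [inner_neg_right, h1']; ring
        exact (inner_eq_one_iff_of_norm_eq_one hp' (by rw [norm_neg]; exact hq')).mp this
      have hz : ∀ r : EuclideanSpace ℝ (Fin d), ‖r‖ = 1 →
          σ (lune r (-r)) = 1 / 2 := by
        intro r hr
        have : lune r (-r) = {u : EuclideanSpace ℝ (Fin d) | 0 ≤ (inner ℝ u r : ℝ)} := by
          ext u
          simp only [lune, Set.mem_setOf_eq, inner_neg_right]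
          constructor
          · exact fun h => h.1
          · exact fun h => ⟨h, by linarith⟩
        rw [this]
        exact halfspace_measure σ hd hsupp hinv r (fun h => by simp [h] at hr)
      have e1 : q = -p := by rw [hqp]; simp
      have e2 : q' = -p' := by rw [hqp']; simp
      rw [e1, e2, hz p hp, hz p' hp']



lemma lune_add
    (hd : 2 ≤ d)
    (hsupp : σ (sphere (0 : EuclideanSpace ℝ (Fin d)) 1)ᶜ = 0)
    (hinv : ∀ g : EuclideanSpace ℝ (Fin d) ≃ₗᵢ[ℝ] EuclideanSpace ℝ (Fin d),
      Measure.map g σ = σ)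
    (e₁ e₂ : EuclideanSpace ℝ (Fin d))
    (he₁ : ‖e₁‖ = 1) (he₂ : ‖e₂‖ = 1) (he : (inner ℝ e₁ e₂ : ℝ) = 0)
    (α θ : ℝ) (h0 : 0 ≤ α) (h1 : α ≤ θ) (h2 : θ ≤ π) :
    σ (lune e₁ (cos θ • e₁ + sin θ • e₂))
      = σ (lune e₁ (cos α • e₁ + sin α • e₂))
        + σ (lune (cos α • e₁ + sin α • e₂) (cos θ • e₁ + sin θ • e₂)) := by
  set Y : ℝ → EuclideanSpace ℝ (Fin d) := fun t => cos t • e₁ + sin t • e₂ with hYdef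
  have hYnorm : ∀ t, ‖Y t‖ = 1 := fun t =>
    norm_combo e₁ e₂ he₁ he₂ he _ _ (by rw [← sin_sq_add_cos_sq t]; ring)
  have hY0 : ∀ t, Y t ≠ 0 := fun t h => by
    have := hYnorm t; rw [h, norm_zero] at this; norm_num at this
  have he₁0 : e₁ ≠ 0 := fun h => by rw [h, norm_zero] at he₁; norm_num at he₁
  have hYinner : ∀ (u : EuclideanSpace ℝ (Fin d)) t,
      (inner ℝ u (Y t) : ℝ) = cos t * inner ℝ u e₁ + sin t * inner ℝ u e₂ := by
    intro u t
    simp only [hYdef, inner_add_right, real_inner_smul_right]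
  set N : Set (EuclideanSpace ℝ (Fin d)) :=
    {u | (inner ℝ u e₁ : ℝ) = 0} ∪ {u | (inner ℝ u (Y α) : ℝ) = 0}
      ∪ {u | (inner ℝ u (Y θ) : ℝ) = 0} with hNdef
  have hNnull : σ N = 0 := by
    refine measure_union_null (measure_union_null ?_ ?_) ?_ <;>
      apply null_hyperplane σ hd hsupp hinv
    · exact he₁0
    · exact hY0 α
    · exact hY0 θ
  have hNmeas : MeasurableSet N := by
    have hc : ∀ x : EuclideanSpace ℝ (Fin d),
        MeasurableSet {u : EuclideanSpace ℝ (Fin d) | (inner ℝ u x : ℝ) = 0} := fun x =>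
      (isClosed_eq (continuous_id.inner continuous_const) continuous_const).measurableSet
    exact ((hc e₁).union (hc (Y α))).union (hc (Y θ))
  -- set identity
  have hset : lune e₁ (Y θ) \ N
      = (lune e₁ (Y α) \ N) ∪ (lune (Y α) (Y θ) \ N) := by
    ext u
    simp only [Set.mem_diff, Set.mem_union, lune, Set.mem_setOf_eq, hNdef, not_or]
    constructor
    · rintro ⟨⟨hA, hY⟩, ⟨hN1, hN2⟩, hN3⟩
      rcases lt_or_gt_of_ne hN2 with hZ | hZ
      · exact Or.inl ⟨⟨hA, le_of_lt hZ⟩, ⟨hN1, hN2⟩, hN3⟩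
      · exact Or.inr ⟨⟨le_of_lt hZ, hY⟩, ⟨hN1, hN2⟩, hN3⟩
    · rintro (⟨⟨hA, hZ⟩, ⟨hN1, hN2⟩, hN3⟩ | ⟨⟨hZ, hY⟩, ⟨hN1, hN2⟩, hN3⟩)
      · refine ⟨⟨hA, ?_⟩, ⟨hN1, hN2⟩, hN3⟩
        rw [hYinner] at *
        exact claimA' α θ _ _ h0 h1 h2 (lt_of_le_of_ne hA (Ne.symm hN1)) (lt_of_le_of_ne hZ hN2)
      · refine ⟨⟨?_, hY⟩, ⟨hN1, hN2⟩, hN3⟩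
        rw [hYinner] at *
        exact claimB' α θ _ _ h0 h1 h2 (lt_of_le_of_ne hZ (Ne.symm hN2)) (lt_of_le_of_ne hY hN3)
  have hdisj : Disjoint (lune e₁ (Y α) \ N) (lune (Y α) (Y θ) \ N) := by
    rw [Set.disjoint_left]
    rintro u ⟨⟨_, hZ1⟩, hN⟩ ⟨⟨hZ2, _⟩, _⟩
    simp only [hNdef, Set.mem_union, Set.mem_setOf_eq, not_or] at hN
    exact hN.1.2 (le_antisymm hZ1 hZ2)
  calc σ (lune e₁ (Y θ)) = σ (lune e₁ (Y θ) \ N) := (measure_diff_null hNnull).symm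
    _ = σ ((lune e₁ (Y α) \ N) ∪ (lune (Y α) (Y θ) \ N)) := by rw [hset]
    _ = σ (lune e₁ (Y α) \ N) + σ (lune (Y α) (Y θ) \ N) :=
        measure_union hdisj ((measurableSet_lune _ _).diff hNmeas)
    _ = σ (lune e₁ (Y α)) + σ (lune (Y α) (Y θ)) := by
        rw [measure_diff_null hNnull, measure_diff_null hNnull]


lemma lune_measure_eq
    (hd : 2 ≤ d)
    (hsupp : σ (sphere (0 : EuclideanSpace ℝ (Fin d)) 1)ᶜ = 0)
    (hinv : ∀ g : EuclideanSpace ℝ (Fin d) ≃ₗᵢ[ℝ] EuclideanSpace ℝ (Fin d),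
      Measure.map g σ = σ)
    (p q : EuclideanSpace ℝ (Fin d)) (hp : ‖p‖ = 1) (hq : ‖q‖ = 1) :
    σ (lune p q) = ENNReal.ofReal (Real.arccos (inner ℝ p q) / (2 * π)) := by
  set i0 : Fin d := ⟨0, by omega⟩ with hi0
  set i1 : Fin d := ⟨1, by omega⟩ with hi1
  have h01 : i0 ≠ i1 := by simp [hi0, hi1, Fin.ext_iff]
  set e₁ : EuclideanSpace ℝ (Fin d) := EuclideanSpace.single i0 (1:ℝ) with he₁def
  set e₂ : EuclideanSpace ℝ (Fin d) := EuclideanSpace.single i1 (1:ℝ) with he₂def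
  have he₁ : ‖e₁‖ = 1 := by rw [he₁def, EuclideanSpace.norm_single]; norm_num
  have he₂ : ‖e₂‖ = 1 := by rw [he₂def, EuclideanSpace.norm_single]; norm_num
  have he : (inner ℝ e₁ e₂ : ℝ) = 0 := by
    rw [he₁def, he₂def, EuclideanSpace.inner_single_left]
    simp [EuclideanSpace.single_apply, h01, h01.symm]
  set Y : ℝ → EuclideanSpace ℝ (Fin d) := fun t => cos t • e₁ + sin t • e₂ with hYdef
  have hYnorm : ∀ t, ‖Y t‖ = 1 := fun t =>
    norm_combo e₁ e₂ he₁ he₂ he _ _ (by rw [← sin_sq_add_cos_sq t]; ring)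
  have hYe₁ : ∀ t, (inner ℝ e₁ (Y t) : ℝ) = cos t := by
    intro t
    have h1 : (inner ℝ e₁ e₁ : ℝ) = 1 := by rw [real_inner_self_eq_norm_sq, he₁]; norm_num
    simp only [hYdef, inner_add_right, real_inner_smul_right, h1, he]
    ring
  have hYY : ∀ s t : ℝ, (inner ℝ (Y s) (Y t) : ℝ) = cos (t - s) := by
    intro s t
    rw [hYdef]
    dsimp only
    rw [inner_combo e₁ e₂ he₁ he₂ he, cos_sub]
    ring
  set F : ℝ → ℝ := fun t => (σ (lune e₁ (Y t))).toReal with hFdef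
  have hadd : ∀ α θ, 0 ≤ α → α ≤ θ → θ ≤ π → F θ = F α + F (θ - α) := by
    intro α θ h0 h1 h2
    have hs := lune_add σ hd hsupp hinv e₁ e₂ he₁ he₂ he α θ h0 h1 h2
    have hi : σ (lune (Y α) (Y θ)) = σ (lune e₁ (Y (θ - α))) := by
      apply lune_inv σ hd hsupp hinv _ _ _ _ (hYnorm α) (hYnorm θ) he₁ (hYnorm (θ - α))
      rw [hYY, hYe₁]
    rw [hFdef]
    dsimp only
    rw [hs, hi, ENNReal.toReal_add (measure_ne_top _ _) (measure_ne_top _ _)]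
  have hnn : ∀ θ, 0 ≤ θ → θ ≤ π → 0 ≤ F θ := fun θ _ _ => ENNReal.toReal_nonneg
  have hpi : F π = 1 / 2 := by
    have hYπ : Y π = -e₁ := by
      rw [hYdef]; simp
    have hlune : lune e₁ (Y π) = {u : EuclideanSpace ℝ (Fin d) | 0 ≤ (inner ℝ u e₁ : ℝ)} := by
      rw [hYπ]
      ext u
      simp only [lune, Set.mem_setOf_eq, inner_neg_right]
      constructor
      · exact fun h => h.1
      · exact fun h => ⟨h, by linarith⟩
    have he₁0 : e₁ ≠ 0 := fun h => by rw [h, norm_zero] at he₁; norm_num at he₁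
    rw [hFdef]
    dsimp only
    rw [hlune, halfspace_measure σ hd hsupp hinv e₁ he₁0]
    simp [ENNReal.toReal_div]
  have hlin := linear_of_additive F hadd hnn hpi
  set c : ℝ := inner ℝ p q with hcdef
  have hcabs : |c| ≤ 1 := by
    have := abs_real_inner_le_norm p q
    rwa [hp, hq, one_mul] at this
  have hc1 : -1 ≤ c := neg_le_of_abs_le hcabs
  have hc2 : c ≤ 1 := le_of_abs_le hcabs
  set t : ℝ := Real.arccos c with htdef
  have ht0 : 0 ≤ t := Real.arccos_nonneg c
  have htπ : t ≤ π := Real.arccos_le_pi c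
  have hiv : σ (lune p q) = σ (lune e₁ (Y t)) := by
    apply lune_inv σ hd hsupp hinv _ _ _ _ hp hq he₁ (hYnorm t)
    rw [hYe₁, htdef, Real.cos_arccos hc1 hc2]
  rw [hiv, ← ENNReal.ofReal_toReal (measure_ne_top σ (lune e₁ (Y t)))]
  congr 1
  exact hlin t ht0 htπ

/-- **Lemma.** Let `σ` be the uniform (i.e. rotation-invariant) probability
measure on the unit sphere `S^{d-1} ⊆ ℝ^d`, `d ≥ 2`.  For points `A B C` with
`A ≠ B`, `C ≠ B`, the `σ`-measure of the set of directions `u` on the sphere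
for which `⟨u, B⟩ ≥ ⟨u, A⟩` and `⟨u, B⟩ ≥ ⟨u, C⟩` equals `(π − ∠ABC) / (2π)`. -/
theorem measure_directions_maximal_at_vertex
    (d : ℕ) (hd : 2 ≤ d)
    (A B C : EuclideanSpace ℝ (Fin d)) (hA : A ≠ B) (hC : C ≠ B)
    (σ : Measure (EuclideanSpace ℝ (Fin d))) [IsProbabilityMeasure σ]
    (hsupp : σ (sphere (0 : EuclideanSpace ℝ (Fin d)) 1)ᶜ = 0)
    (hinv : ∀ g : EuclideanSpace ℝ (Fin d) ≃ₗᵢ[ℝ] EuclideanSpace ℝ (Fin d),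
      Measure.map g σ = σ) :
    σ {u : EuclideanSpace ℝ (Fin d) |
        u ∈ sphere (0 : EuclideanSpace ℝ (Fin d)) 1 ∧
        (inner ℝ u A : ℝ) ≤ inner ℝ u B ∧ (inner ℝ u C : ℝ) ≤ inner ℝ u B}
      = ENNReal.ofReal ((π - EuclideanGeometry.angle A B C) / (2 * π)) := by
  have hx : B - A ≠ 0 := sub_ne_zero.mpr (Ne.symm hA)
  have hz : B - C ≠ 0 := sub_ne_zero.mpr (Ne.symm hC)
  set x : EuclideanSpace ℝ (Fin d) := B - A with hxdef
  set z : EuclideanSpace ℝ (Fin d) := B - C with hzdef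
  have hxn : (0:ℝ) < ‖x‖ := norm_pos_iff.mpr hx
  have hzn : (0:ℝ) < ‖z‖ := norm_pos_iff.mpr hz
  set p : EuclideanSpace ℝ (Fin d) := ‖x‖⁻¹ • x with hpdef
  set q : EuclideanSpace ℝ (Fin d) := -(‖z‖⁻¹ • z) with hqdef
  have hp : ‖p‖ = 1 := by
    rw [hpdef, norm_smul, norm_inv, norm_norm]
    field_simp
  have hq : ‖q‖ = 1 := by
    rw [hqdef, norm_neg, norm_smul, norm_inv, norm_norm]
    field_simp
  have hiff1 : ∀ u : EuclideanSpace ℝ (Fin d),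
      ((inner ℝ u A : ℝ) ≤ inner ℝ u B) ↔ 0 ≤ (inner ℝ u p : ℝ) := by
    intro u
    rw [hpdef, real_inner_smul_right, mul_nonneg_iff_of_pos_left (inv_pos.mpr hxn),
      hxdef, inner_sub_right, sub_nonneg]
  have hiff2 : ∀ u : EuclideanSpace ℝ (Fin d),
      ((inner ℝ u C : ℝ) ≤ inner ℝ u B) ↔ (inner ℝ u q : ℝ) ≤ 0 := by
    intro u
    rw [hqdef, inner_neg_right, neg_nonpos, real_inner_smul_right,
      mul_nonneg_iff_of_pos_left (inv_pos.mpr hzn), hzdef, inner_sub_right, sub_nonneg]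
  have hTset : {u : EuclideanSpace ℝ (Fin d) |
        u ∈ sphere (0 : EuclideanSpace ℝ (Fin d)) 1 ∧
        (inner ℝ u A : ℝ) ≤ inner ℝ u B ∧ (inner ℝ u C : ℝ) ≤ inner ℝ u B}
      = lune p q \ (sphere (0 : EuclideanSpace ℝ (Fin d)) 1)ᶜ := by
    ext u
    simp only [Set.mem_setOf_eq, Set.mem_diff, Set.mem_compl_iff, not_not, lune]
    constructor
    · rintro ⟨hs, h1, h2⟩
      exact ⟨⟨(hiff1 u).mp h1, (hiff2 u).mp h2⟩, hs⟩
    · rintro ⟨⟨h1, h2⟩, hs⟩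
      exact ⟨hs, (hiff1 u).mpr h1, (hiff2 u).mpr h2⟩
  rw [hTset, measure_diff_null hsupp, lune_measure_eq σ hd hsupp hinv p q hp hq]
  congr 1
  have hang : EuclideanGeometry.angle A B C
      = Real.arccos ((inner ℝ x z : ℝ) / (‖x‖ * ‖z‖)) := by
    rw [EuclideanGeometry.angle, vsub_eq_sub, vsub_eq_sub, InnerProductGeometry.angle]
    have h1 : A - B = -(B - A) := (neg_sub B A).symm
    have h2 : C - B = -(B - C) := (neg_sub B C).symm
    rw [h1, h2, inner_neg_neg, norm_neg, norm_neg]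
  have hpq : (inner ℝ p q : ℝ) = -((inner ℝ x z : ℝ) / (‖x‖ * ‖z‖)) := by
    rw [hpdef, hqdef, inner_neg_right, real_inner_smul_left, real_inner_smul_right]
    field_simp
  rw [hpq, Real.arccos_neg, hang]
end

section
/- Let λ be a Borel measure on ℝ with uncountable support such that ∫ min(x², 1) dλ(x) < ∞. Then for any finite collection of distinct real numbers a_1, …, a_n, the functions x ↦ e^{i a_j x} − 1 (j = 1, …, n), regarded as elements of the real Hilbert space L²(λ) of complex-valued square-integrable functions, are affinely independent. -/
open Real MeasureTheory Complex

/-- The topological support of a measure on `ℝ`: all points every open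
neighbourhood of which has positive measure. -/
def measureSupport (μ : MeasureTheory.Measure ℝ) : Set ℝ :=
  {x : ℝ | ∀ U : Set ℝ, IsOpen U → x ∈ U → μ U ≠ 0}

lemma measureSupport_isClosed (μ : MeasureTheory.Measure ℝ) :
    IsClosed (measureSupport μ) := by
  rw [← isOpen_compl_iff]
  rw [isOpen_iff_mem_nhds]
  intro x hx
  simp only [Set.mem_compl_iff, measureSupport, Set.mem_setOf_eq, not_forall] at hx
  obtain ⟨U, hUo, hxU, hUμ⟩ := hx
  rw [not_ne_iff] at hUμ
  filter_upwards [hUo.mem_nhds hxU] with y hy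
  simp only [Set.mem_compl_iff, measureSupport, Set.mem_setOf_eq, not_forall]
  exact ⟨U, hUo, hy, by rw [not_ne_iff]; exact hUμ⟩

/-- Iterated derivatives of a finite linear combination of exponentials. -/
lemma iteratedDeriv_zero_fun (k : ℕ) :
    iteratedDeriv k (fun _ : ℂ => (0 : ℂ)) = fun _ => 0 := by
  induction k with
  | zero => simp [iteratedDeriv_zero]
  | succ k ih =>
    rw [iteratedDeriv_succ, ih]
    funext z
    simp

/-- Iterated derivatives of a finite linear combination of exponentials. -/
lemma iteratedDeriv_exp_comb {n : ℕ} (t : Fin n → ℝ) (b : Fin n → ℂ) (k : ℕ) :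
    iteratedDeriv k (fun z : ℂ => ∑ j, (t j : ℂ) * Complex.exp (b j * z))
      = fun z : ℂ => ∑ j, (t j : ℂ) * b j ^ k * Complex.exp (b j * z) := by
  induction k with
  | zero => simp [iteratedDeriv_zero]
  | succ k ih =>
    rw [iteratedDeriv_succ, ih]
    funext z
    have h : ∀ j ∈ Finset.univ, HasDerivAt
        (fun z : ℂ => (t j : ℂ) * b j ^ k * Complex.exp (b j * z))
        ((t j : ℂ) * b j ^ (k + 1) * Complex.exp (b j * z)) z := by
      intro j _
      have h1 : HasDerivAt (fun z : ℂ => b j * z) (b j) z := by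
        simpa using (hasDerivAt_id z).const_mul (b j)
      have h2 := h1.cexp
      have h3 := h2.const_mul ((t j : ℂ) * b j ^ k)
      exact h3.congr_deriv (by ring)
    exact (HasDerivAt.fun_sum h).deriv

/-- **Proposition.** If `λ` is a Borel measure on `ℝ` with uncountable support
such that `∫ min(x², 1) dλ(x) < ∞`, then any finite collection of functions of
the form `x ↦ e^{i a x} − 1`, `a ∈ ℝ`, is affinely independent in `L²(λ)`
viewed as a real Hilbert space: if real weights `t j` have zero sum and the
corresponding weighted combination vanishes `λ`-a.e., then all `t j` vanish. -/
theorem exp_sub_one_affine_independent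
    (lam : Measure ℝ)
    (hunc : ¬ (measureSupport lam).Countable)
    (hint : Integrable (fun x : ℝ => min (x ^ 2) 1) lam)
    (n : ℕ) (a : Fin n → ℝ) (ha : Function.Injective a)
    (t : Fin n → ℝ) (hsum : ∑ j, t j = 0)
    (hzero : (fun x : ℝ => ∑ j, (t j : ℂ) * (Complex.exp (Complex.I * a j * x) - 1))
      =ᵐ[lam] 0) :
    ∀ j, t j = 0 := by
  -- The entire function F
  set F : ℂ → ℂ := fun z => ∑ j, (t j : ℂ) * Complex.exp (Complex.I * a j * z) with hF
  -- The original combination equals F since ∑ t j = 0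
  have hcomb : ∀ x : ℝ, (∑ j, (t j : ℂ) * (Complex.exp (Complex.I * a j * x) - 1)) = F x := by
    intro x
    have hs : (∑ j, (t j : ℂ)) = 0 := by exact_mod_cast congrArg (fun r : ℝ => (r : ℂ)) hsum
    simp only [hF, mul_sub, mul_one, Finset.sum_sub_distrib, hs, sub_zero]
  -- F vanishes a.e.
  have hae : ∀ᵐ x : ℝ ∂lam, F (x : ℂ) = 0 := by
    filter_upwards [hzero] with x hx
    rw [← hcomb x]
    simpa using hx
  -- F ∘ ofReal is continuous
  have hFc : Continuous fun x : ℝ => F (x : ℂ) := by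
    apply continuous_finset_sum
    intro j _
    exact continuous_const.mul (Complex.continuous_exp.comp (continuous_const.mul
      Complex.continuous_ofReal))
  -- the support is contained in the real zero set of F
  have hsub : measureSupport lam ⊆ {x : ℝ | F (x : ℂ) = 0} := by
    intro x hx
    by_contra hFx
    have hopen : IsOpen {y : ℝ | F (y : ℂ) ≠ 0} := by
      have : {y : ℝ | F (y : ℂ) ≠ 0} = (fun y : ℝ => F (y : ℂ)) ⁻¹' ({0}ᶜ) := rfl
      rw [this]
      exact (isOpen_compl_singleton).preimage hFc
    have hmem : x ∈ {y : ℝ | F (y : ℂ) ≠ 0} := hFx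
    have hμ : lam {y : ℝ | F (y : ℂ) ≠ 0} = 0 := by
      rw [ae_iff] at hae
      exact hae
    exact hx _ hopen hmem hμ
  -- the support is closed and uncountable, so it has an accumulation point in itself
  obtain ⟨V, D, hVc, hD, hVD⟩ :=
    exists_countable_union_perfect_of_isClosed (measureSupport_isClosed lam)
  have hDne : D.Nonempty := by
    rcases D.eq_empty_or_nonempty with h | h
    · exfalso; apply hunc; rw [hVD, h, Set.union_empty]; exact hVc
    · exact h
  obtain ⟨x₀, hx₀⟩ := hDne
  have hacc : AccPt x₀ (Filter.principal {x : ℝ | F (x : ℂ) = 0}) :=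
    (hD.acc x₀ hx₀).mono (Filter.principal_mono.2
      (fun y hy => hsub (hVD ▸ Set.mem_union_right V hy)))
  -- push the accumulation to ℂ: frequently F z = 0 near (x₀ : ℂ)
  have hfreq : ∃ᶠ z in nhdsWithin (x₀ : ℂ) {z : ℂ | z ≠ (x₀ : ℂ)}, F z = 0 := by
    have h1 : ∃ᶠ y : ℝ in nhds x₀, y ≠ x₀ ∧ F (y : ℂ) = 0 :=
      accPt_iff_frequently.1 hacc
    have h2 : ∃ᶠ y : ℝ in nhdsWithin x₀ ({y : ℝ | y ≠ x₀}), F (y : ℂ) = 0 := by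
      rw [nhdsWithin, Filter.frequently_inf_principal]
      exact h1.mono fun y hy => ⟨hy.1, hy.2⟩
    have htend : Filter.Tendsto (fun y : ℝ => (y : ℂ)) (nhdsWithin x₀ ({y : ℝ | y ≠ x₀}))
        (nhdsWithin (x₀ : ℂ) {z : ℂ | z ≠ (x₀ : ℂ)}) := by
      rw [nhdsWithin, nhdsWithin]
      exact Filter.Tendsto.inf (Complex.continuous_ofReal.tendsto x₀)
        (Filter.tendsto_principal_principal.2
          (fun y hy h => hy (Complex.ofReal_injective h)))
    exact htend.frequently h2
  -- F is analytic on ℂ, hence identically zero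
  have hFa : AnalyticOnNhd ℂ F Set.univ := by
    intro z _
    apply Finset.analyticAt_fun_sum
    intro j _
    exact analyticAt_const.mul (analyticAt_cexp.comp
      ((analyticAt_const.mul analyticAt_id)))
  have hF0 : ∀ z : ℂ, F z = 0 := by
    have := hFa.eqOn_zero_of_preconnected_of_frequently_eq_zero
      isPreconnected_univ (Set.mem_univ (x₀ : ℂ)) hfreq
    exact fun z => this (Set.mem_univ z)
  -- all iterated derivatives of F at 0 vanish: power sums vanish
  have hpow : ∀ k : ℕ, (∑ j, (t j : ℂ) * (a j : ℂ) ^ k) = 0 := by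
    intro k
    have hFz : F = fun _ => (0 : ℂ) := funext hF0
    have h1 : iteratedDeriv k F 0 = ∑ j, (t j : ℂ) * (Complex.I * a j) ^ k := by
      have h := congrFun (iteratedDeriv_exp_comb t (fun j => Complex.I * a j) k) 0
      rw [hF]
      simpa using h
    have h2 : iteratedDeriv k F 0 = 0 := by
      rw [hFz, iteratedDeriv_zero_fun]
    rw [h1] at h2
    have h3 : (Complex.I ^ k) * (∑ j, (t j : ℂ) * (a j : ℂ) ^ k) = 0 := by
      rw [Finset.mul_sum]
      rw [← h2]
      congr 1
      funext j
      rw [mul_pow]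
      ring
    have hI : (Complex.I : ℂ) ^ k ≠ 0 := pow_ne_zero _ Complex.I_ne_zero
    exact (mul_eq_zero.1 h3).resolve_left hI
  have hpowR : ∀ k : ℕ, (∑ j, t j * a j ^ k) = 0 := by
    intro k
    exact_mod_cast hpow k
  have := Matrix.eq_zero_of_forall_pow_sum_mul_pow_eq_zero ha
    (fun i : Fin n => hpowR (i : ℕ))
  exact fun j => congrFun this j
end

section
/- Let λ be a Borel measure on ℝ such that ∫ min(x², 1) dλ(x) < ∞. For each a ∈ ℝ, the function F(a) : x ↦ e^{2iax} − 1 belongs to L²(λ), and for all a, b ∈ ℝ one has ‖F(a) − F(b)‖_{L²(λ)} = 2 f(|a − b|), where f(t) := (∫ sin²(tx) dλ(x))^{1/2}. In particular, a ↦ F(a) is an isometric embedding of ℝ equipped with the semimetric (a, b) ↦ 2 f(|a − b|) into the Hilbert space L²(λ). -/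
open Real MeasureTheory Complex
open scoped ENNReal

lemma norm_exp_two_I_sub_one (t x : ℝ) :
    ‖Complex.exp (2 * Complex.I * t * x) - 1‖ = 2 * |Real.sin (t * x)| := by
  have h : (2 * Complex.I * t * x) = ((2 * (t * x) : ℝ) : ℂ) * Complex.I := by
    push_cast; ring
  rw [h, Complex.exp_mul_I, ← Complex.ofReal_cos, ← Complex.ofReal_sin]
  have h1 : (↑(Real.cos (2 * (t * x))) + ↑(Real.sin (2 * (t * x))) * Complex.I - 1 : ℂ)
      = ((Real.cos (2 * (t * x)) - 1 : ℝ) : ℂ) + ((Real.sin (2 * (t * x)) : ℝ) : ℂ) * Complex.I := by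
    push_cast; ring
  rw [h1, Complex.norm_add_mul_I]
  have h2 : (Real.cos (2 * (t * x)) - 1) ^ 2 + Real.sin (2 * (t * x)) ^ 2
      = (2 * |Real.sin (t * x)|) ^ 2 := by
    have hc := Real.cos_two_mul (t * x)
    have hs := Real.sin_sq_add_cos_sq (t * x)
    have hss := Real.sin_sq_add_cos_sq (2 * (t * x))
    have habs : |Real.sin (t * x)| ^ 2 = Real.sin (t * x) ^ 2 := sq_abs _
    nlinarith
  rw [h2, Real.sqrt_sq (by positivity)]

lemma sin_sq_integrable (lam : Measure ℝ)
    (hint : Integrable (fun x : ℝ => min (x ^ 2) 1) lam) (t : ℝ) :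
    Integrable (fun x : ℝ => Real.sin (t * x) ^ 2) lam := by
  have hm : AEStronglyMeasurable (fun x : ℝ => Real.sin (t * x) ^ 2) lam :=
    (Continuous.aestronglyMeasurable (by fun_prop))
  refine Integrable.mono' (hint.const_mul (max (t ^ 2) 1)) hm (ae_of_all _ fun x => ?_)
  rw [Real.norm_eq_abs, _root_.abs_of_nonneg (sq_nonneg (Real.sin (t*x)))]
  have h1 : Real.sin (t * x) ^ 2 ≤ (t * x) ^ 2 := Real.sin_sq_le_sq
  have h2 : Real.sin (t * x) ^ 2 ≤ 1 := Real.sin_sq_le_one _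
  rcases le_total (x ^ 2) 1 with h | h
  · rw [min_eq_left h]
    calc Real.sin (t * x) ^ 2 ≤ (t * x) ^ 2 := h1
      _ = t ^ 2 * x ^ 2 := by ring
      _ ≤ max (t ^ 2) 1 * x ^ 2 := by
          exact mul_le_mul_of_nonneg_right (le_max_left _ _) (sq_nonneg _)
  · rw [min_eq_right h]
    calc Real.sin (t * x) ^ 2 ≤ 1 := h2
      _ ≤ max (t ^ 2) 1 := le_max_right _ _
      _ = max (t ^ 2) 1 * 1 := (mul_one _).symm

lemma memLp_aux (lam : Measure ℝ)
    (hint : Integrable (fun x : ℝ => min (x ^ 2) 1) lam) (t : ℝ) :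
    MemLp (fun x : ℝ => Complex.exp (2 * Complex.I * t * x) - 1) 2 lam := by
  have hcont : Continuous (fun x : ℝ => Complex.exp (2 * Complex.I * t * x) - 1) := by
    fun_prop
  refine (memLp_two_iff_integrable_sq_norm hcont.aestronglyMeasurable).2 ?_
  have := (sin_sq_integrable lam hint t).const_mul 4
  refine this.congr (ae_of_all _ fun x => ?_)
  simp only [norm_exp_two_I_sub_one, mul_pow, sq_abs]
  ring_nf

/-- **Lemma (Schoenberg embedding).** Let `λ` be a Borel measure on `ℝ` with
`∫ min(x², 1) dλ(x) < ∞`.  Then for every `a ∈ ℝ` the function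
`F a : x ↦ e^{2iax} − 1` lies in `L²(λ)`, and for all `a, b ∈ ℝ`,
`‖F a − F b‖_{L²(λ)} = 2 f(|a − b|)` where `f t = (∫ sin²(tx) dλ(x))^{1/2}`;
that is, `F` is an isometric embedding of `ℝ` with the semimetric
`(a, b) ↦ 2 f(|a − b|)` into the Hilbert space `L²(λ)`. -/
theorem exp_two_ia_sub_one_memLp_and_dist
    (lam : Measure ℝ)
    (hint : Integrable (fun x : ℝ => min (x ^ 2) 1) lam) :
    (∀ a : ℝ, MemLp (fun x : ℝ => Complex.exp (2 * Complex.I * a * x) - 1) 2 lam) ∧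
    (∀ a b : ℝ,
      eLpNorm (fun x : ℝ =>
          (Complex.exp (2 * Complex.I * a * x) - 1)
            - (Complex.exp (2 * Complex.I * b * x) - 1)) 2 lam
        = ENNReal.ofReal (2 * Real.sqrt (∫ x, Real.sin (|a - b| * x) ^ 2 ∂lam))) := by
  refine ⟨memLp_aux lam hint, fun a b => ?_⟩
  have key : ∀ x : ℝ, ‖(Complex.exp (2 * Complex.I * a * x) - 1)
      - (Complex.exp (2 * Complex.I * b * x) - 1)‖ = 2 * |Real.sin (|a - b| * x)| := by
    intro x
    have hfac : (Complex.exp (2 * Complex.I * a * x) - 1)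
        - (Complex.exp (2 * Complex.I * b * x) - 1)
        = Complex.exp (2 * Complex.I * b * x) * (Complex.exp (2 * Complex.I * (a - b) * x) - 1) := by
      rw [mul_sub, ← Complex.exp_add, mul_one]
      push_cast; ring_nf
    rw [hfac, norm_mul]
    have hb : (2 * Complex.I * b * x) = ((2 * (b * x) : ℝ) : ℂ) * Complex.I := by
      push_cast; ring
    rw [hb]
    have : ‖Complex.exp (((2 * (b * x) : ℝ) : ℂ) * Complex.I)‖ = 1 := by
      rw [Complex.norm_exp_ofReal_mul_I]
    rw [this, one_mul,
      show (2 * Complex.I * ((a : ℂ) - (b : ℂ)) * (x : ℂ))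
        = 2 * Complex.I * ((a - b : ℝ) : ℂ) * (x : ℂ) by push_cast; ring,
      norm_exp_two_I_sub_one]
    rcases abs_cases (a - b) with ⟨h, _⟩ | ⟨h, _⟩
    · rw [h]
    · rw [h]
      rw [show -(a - b) * x = -((a - b) * x) by ring, Real.sin_neg, abs_neg]
  have hmem : MemLp (fun x : ℝ => (Complex.exp (2 * Complex.I * a * x) - 1)
      - (Complex.exp (2 * Complex.I * b * x) - 1)) 2 lam :=
    (memLp_aux lam hint a).sub (memLp_aux lam hint b)
  rw [hmem.eLpNorm_eq_integral_rpow_norm two_ne_zero ENNReal.ofNat_ne_top]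
  congr 1
  have htr : (2 : ℝ≥0∞).toReal = (2 : ℝ) := by simp
  rw [htr]
  have hI : ∫ x, ‖(Complex.exp (2 * Complex.I * a * x) - 1)
      - (Complex.exp (2 * Complex.I * b * x) - 1)‖ ^ (2 : ℝ) ∂lam
      = 4 * ∫ x, Real.sin (|a - b| * x) ^ 2 ∂lam := by
    rw [← integral_const_mul]
    refine integral_congr_ae (ae_of_all _ fun x => ?_)
    simp only [key x]
    rw [show ((2 : ℝ)) = ((2 : ℕ) : ℝ) by norm_num, Real.rpow_natCast]
    rw [mul_pow, _root_.sq_abs]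
    ring
  rw [hI]
  have hnn : 0 ≤ ∫ x, Real.sin (|a - b| * x) ^ 2 ∂lam :=
    integral_nonneg fun x => sq_nonneg _
  rw [show ((2 : ℝ))⁻¹ = 1 / 2 by norm_num, ← Real.sqrt_eq_rpow]
  rw [show (4 : ℝ) = 2 ^ 2 by norm_num, Real.sqrt_mul (by positivity), Real.sqrt_sq (by norm_num)]
end

section
/- Let λ be a Borel measure on ℝ such that ∫ min(x², 1) dλ(x) < ∞, and define f(t) := (∫ sin²(tx) dλ(x))^{1/2} for t ≥ 0. Then f is subadditive: for all s, t ≥ 0, f(t + s) ≤ f(t) + f(s). -/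
open Real MeasureTheory

lemma sin_sq_memLp (lam : Measure ℝ)
    (hint : Integrable (fun x : ℝ => min (x ^ 2) 1) lam) (c : ℝ) :
    MemLp (fun x : ℝ => Real.sin (c * x)) 2 lam := by
  have hmeas : AEStronglyMeasurable (fun x : ℝ => Real.sin (c * x)) lam :=
    (Real.continuous_sin.comp (continuous_const.mul continuous_id)).aestronglyMeasurable
  rw [memLp_two_iff_integrable_sq hmeas]
  apply (hint.const_mul (max (c ^ 2) 1)).mono' (hmeas.mul hmeas |>.congr ?_)
  · filter_upwards with x
    have h1 : Real.sin (c * x) ^ 2 ≤ 1 := by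
      nlinarith [Real.neg_one_le_sin (c * x), Real.sin_le_one (c * x)]
    have h2 : Real.sin (c * x) ^ 2 ≤ (c * x) ^ 2 := Real.sin_sq_le_sq
    rw [Real.norm_eq_abs, abs_of_nonneg (sq_nonneg _)]
    rcases le_total (x ^ 2) 1 with hx | hx
    · have : min (x ^ 2) 1 = x ^ 2 := min_eq_left hx
      rw [this]
      calc Real.sin (c * x) ^ 2 ≤ (c * x) ^ 2 := h2
        _ = c ^ 2 * x ^ 2 := by ring
        _ ≤ max (c ^ 2) 1 * x ^ 2 := by nlinarith [le_max_left (c ^ 2) 1, sq_nonneg x]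
    · have : min (x ^ 2) 1 = 1 := min_eq_right hx
      rw [this, mul_one]
      exact h1.trans (le_max_right _ _)
  · filter_upwards with x; simp [sq]

lemma sqrt_int_eq (lam : Measure ℝ) {f : ℝ → ℝ} (hf : MeasureTheory.MemLp f 2 lam) :
    Real.sqrt (∫ x, f x ^ 2 ∂lam) = (eLpNorm f 2 lam).toReal := by
  rw [hf.eLpNorm_eq_integral_rpow_norm two_ne_zero ENNReal.ofNat_ne_top]
  have h2 : (2 : ENNReal).toReal = 2 := by simp
  rw [h2, ENNReal.toReal_ofReal (by positivity)]
  rw [Real.sqrt_eq_rpow]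
  congr 1
  · apply integral_congr_ae; filter_upwards with x
    rw [Real.norm_eq_abs, show (2:ℝ) = ((2:ℕ):ℝ) by norm_num, Real.rpow_natCast, sq_abs]
  · norm_num

/-- **Subadditivity of an admissible cost function.** For a Borel measure `λ`
on `ℝ` with `∫ min(x², 1) dλ(x) < ∞`, the function
`f(t) = (∫ sin²(tx) dλ(x))^{1/2}` is subadditive on `[0, ∞)`. -/
theorem admissible_cost_subadditive
    (lam : Measure ℝ)
    (hint : Integrable (fun x : ℝ => min (x ^ 2) 1) lam)
    (s t : ℝ) (hs : 0 ≤ s) (ht : 0 ≤ t) :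
    Real.sqrt (∫ x, Real.sin ((t + s) * x) ^ 2 ∂lam)
      ≤ Real.sqrt (∫ x, Real.sin (t * x) ^ 2 ∂lam)
        + Real.sqrt (∫ x, Real.sin (s * x) ^ 2 ∂lam) := by
  have hw := sin_sq_memLp lam hint (t + s)
  have hu := sin_sq_memLp lam hint t
  have hv := sin_sq_memLp lam hint s
  rw [sqrt_int_eq lam hw, sqrt_int_eq lam hu, sqrt_int_eq lam hv]
  have hptw : ∀ x : ℝ, ‖Real.sin ((t + s) * x)‖
      ≤ |Real.sin (t * x)| + |Real.sin (s * x)| := by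
    intro x
    rw [Real.norm_eq_abs, add_mul, Real.sin_add]
    calc |Real.sin (t*x) * Real.cos (s*x) + Real.cos (t*x) * Real.sin (s*x)|
        ≤ |Real.sin (t*x) * Real.cos (s*x)| + |Real.cos (t*x) * Real.sin (s*x)| :=
          abs_add_le _ _
      _ = |Real.sin (t*x)| * |Real.cos (s*x)| + |Real.cos (t*x)| * |Real.sin (s*x)| := by
          rw [abs_mul, abs_mul]
      _ ≤ |Real.sin (t*x)| * 1 + 1 * |Real.sin (s*x)| := by
          gcongr
          · exact Real.abs_cos_le_one _
          · exact Real.abs_cos_le_one _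
      _ = |Real.sin (t*x)| + |Real.sin (s*x)| := by ring
  have h1 := eLpNorm_mono_real (μ := lam) (p := 2) hptw
  have h2 : eLpNorm (fun x : ℝ => |Real.sin (t * x)| + |Real.sin (s * x)|) 2 lam
      ≤ eLpNorm (fun x : ℝ => Real.sin (t * x)) 2 lam
        + eLpNorm (fun x : ℝ => Real.sin (s * x)) 2 lam := by
    have heq : (fun x : ℝ => |Real.sin (t * x)| + |Real.sin (s * x)|)
        = (fun x : ℝ => ‖Real.sin (t * x)‖) + (fun x : ℝ => ‖Real.sin (s * x)‖) := by
      funext x; simp [Real.norm_eq_abs]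
    rw [heq]
    exact (eLpNorm_add_le hu.1.norm hv.1.norm one_le_two).trans
      (by rw [eLpNorm_norm, eLpNorm_norm])
  have hle := h1.trans h2
  have hfu := hu.2.ne
  have hfv := hv.2.ne
  calc (eLpNorm (fun x : ℝ => Real.sin ((t + s) * x)) 2 lam).toReal
      ≤ (eLpNorm (fun x : ℝ => Real.sin (t * x)) 2 lam
          + eLpNorm (fun x : ℝ => Real.sin (s * x)) 2 lam).toReal :=
        ENNReal.toReal_mono (ENNReal.add_ne_top.2 ⟨hfu, hfv⟩) hle
    _ = _ := ENNReal.toReal_add hfu hfv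
end

section
/- Let λ be a nonzero finite Borel measure on ℝ whose support is contained in the interval [0.9, 1.1], and define f(t) := (∫ sin²(tx) dλ(x))^{1/2}. Then f(π) < f(π/2); in particular, f is not monotone increasing. -/
open Real MeasureTheory Set

/-- **Example (non-monotonicity).** If `λ` is a nonzero finite Borel measure on
`ℝ` with support contained in `[0.9, 1.1]` and
`f(t) = (∫ sin²(tx) dλ(x))^{1/2}`, then `f(π) < f(π/2)`; in particular `f` is
not monotone increasing. -/
theorem admissible_cost_not_monotone
    (lam : Measure ℝ) [IsFiniteMeasure lam] (hne : lam ≠ 0)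
    (hsupp : measureSupport lam ⊆ Icc (0.9 : ℝ) 1.1) :
    Real.sqrt (∫ x, Real.sin (π * x) ^ 2 ∂lam)
      < Real.sqrt (∫ x, Real.sin (π / 2 * x) ^ 2 ∂lam) := by
  -- the complement of [0.9, 1.1] is null
  have hnull : lam (Icc (0.9 : ℝ) 1.1)ᶜ = 0 := by
    apply measure_null_of_locally_null
    intro x hx
    have hx' : x ∉ measureSupport lam := fun h => hx (hsupp h)
    simp only [measureSupport, mem_setOf_eq, not_forall] at hx'
    obtain ⟨U, hUo, hxU, hU0⟩ := hx'
    push_neg at hU0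
    exact ⟨U, nhdsWithin_le_nhds (hUo.mem_nhds hxU), hU0⟩
  have hae : ∀ᵐ x ∂lam, x ∈ Icc (0.9 : ℝ) 1.1 := by
    rw [ae_iff]
    exact hnull
  -- pointwise bounds
  have hb1 : ∀ᵐ x ∂lam, Real.sin (π * x) ^ 2 ≤ 0.1 := by
    filter_upwards [hae] with x hx
    have h1 : |Real.sin (π * x)| ≤ 0.1 * π := by
      have : Real.sin (π * x) = Real.sin (π - π * x) := (Real.sin_pi_sub _).symm
      rw [this]
      calc |Real.sin (π - π * x)| ≤ |π - π * x| := Real.abs_sin_le_abs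
        _ = π * |1 - x| := by rw [show π - π * x = π * (1 - x) by ring, abs_mul,
              abs_of_pos Real.pi_pos]
        _ ≤ π * 0.1 := by
            have : |1 - x| ≤ 0.1 := abs_le.2 ⟨by linarith [hx.2], by linarith [hx.1]⟩
            nlinarith [Real.pi_pos]
        _ = 0.1 * π := by ring
    have hπ : π ≤ 3.15 := by linarith [Real.pi_lt_d2]
    have h2 : |Real.sin (π * x)| ≤ 0.315 := by linarith
    calc Real.sin (π * x) ^ 2 = |Real.sin (π * x)| ^ 2 := (sq_abs _).symm
      _ ≤ 0.315 ^ 2 := by nlinarith [abs_nonneg (Real.sin (π * x))]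
      _ ≤ 0.1 := by norm_num
  have hb2 : ∀ᵐ x ∂lam, (0.9 : ℝ) ≤ Real.sin (π / 2 * x) ^ 2 := by
    filter_upwards [hae] with x hx
    have key : Real.sin (π / 2 * x) = Real.cos (π / 2 * (1 - x)) := by
      rw [← Real.cos_pi_div_two_sub]; ring_nf
    have h1 : Real.cos (π / 2 * (1 - x)) ≥ 1 - (π / 2 * (1 - x)) ^ 2 / 2 :=
      Real.one_sub_sq_div_two_le_cos
    have hπ : π ≤ 3.15 := by linarith [Real.pi_lt_d2]
    have hπ0 : 0 < π := Real.pi_pos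
    have hab : |1 - x| ≤ 0.1 := abs_le.2 ⟨by linarith [hx.2], by linarith [hx.1]⟩
    have hsq : (1 - x) ^ 2 ≤ 0.01 := by nlinarith [abs_le.1 hab, sq_abs (1 - x)]
    have hπ2 : π ^ 2 ≤ 9.9225 := by nlinarith
    have hmul : π ^ 2 * (1 - x) ^ 2 ≤ 9.9225 * 0.01 :=
      mul_le_mul hπ2 hsq (sq_nonneg _) (by norm_num)
    have h2 : (π / 2 * (1 - x)) ^ 2 ≤ (3.15 / 2 * 0.1) ^ 2 := by nlinarith
    have h3 : Real.sin (π / 2 * x) ≥ 0.95 := by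
      rw [key]; nlinarith
    nlinarith
  -- integrability
  have hi1 : Integrable (fun x => Real.sin (π * x) ^ 2) lam := by
    apply Integrable.mono' (integrable_const (1 : ℝ))
    · exact ((Real.continuous_sin.comp (continuous_const.mul continuous_id)).pow 2).aestronglyMeasurable
    · filter_upwards with x
      rw [Real.norm_eq_abs, abs_of_nonneg (sq_nonneg _)]
      nlinarith [Real.neg_one_le_sin (π * x), Real.sin_le_one (π * x)]
  have hi2 : Integrable (fun x => Real.sin (π / 2 * x) ^ 2) lam := by
    apply Integrable.mono' (integrable_const (1 : ℝ))
    · exact ((Real.continuous_sin.comp (continuous_const.mul continuous_id)).pow 2).aestronglyMeasurable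
    · filter_upwards with x
      rw [Real.norm_eq_abs, abs_of_nonneg (sq_nonneg _)]
      nlinarith [Real.neg_one_le_sin (π / 2 * x), Real.sin_le_one (π / 2 * x)]
  set m : ℝ := (lam Set.univ).toReal with hm
  have hm0 : 0 < m := by
    rw [hm, ENNReal.toReal_pos_iff]
    refine ⟨?_, measure_lt_top _ _⟩
    simpa [Measure.measure_univ_eq_zero] using hne
  have hI1 : ∫ x, Real.sin (π * x) ^ 2 ∂lam ≤ 0.1 * m := by
    have := integral_mono_ae hi1 (integrable_const (0.1 : ℝ)) hb1
    simpa [hm, mul_comm, measureReal_def] using this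
  have hI2 : (0.9 : ℝ) * m ≤ ∫ x, Real.sin (π / 2 * x) ^ 2 ∂lam := by
    have := integral_mono_ae (integrable_const (0.9 : ℝ)) hi2 hb2
    simpa [hm, mul_comm, measureReal_def] using this
  apply Real.sqrt_lt_sqrt
  · exact integral_nonneg fun x => sq_nonneg _
  · linarith
end

section
/- Let P, Q, R be points in ℝ² with Q ≠ P and R ≠ P, and let w₁ ≥ 0 and w₂, w₃ > 0 be reals. Define L(X) := w₁·|PX| + w₂·|QX| + w₃·|RX| for X ∈ ℝ². Suppose P minimizes L over ℝ² (i.e., L(P) ≤ L(X) for all X) and w₁ < w₂ + w₃. Then cos(∠QPR) ≤ (w₁² − w₂² − w₃²)/(2 w₂ w₃), where ∠QPR is the unsigned angle in [0, π] between Q − P and R − P. Equivalently, either w₁ ≥ w₂ + w₃, or there is a triangle with side lengths w₁, w₂, w₃ and the angle ∠QPR is at least the outer angle between the sides of lengths w₂ and w₃ in that triangle. -/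
open Real EuclideanGeometry

set_option maxHeartbeats 1000000 in
/-- **Lemma (angle condition at a minimizing vertex).** Let `P, Q, R ∈ ℝ²` with
`Q ≠ P`, `R ≠ P`, let `w₁ ≥ 0`, `w₂, w₃ > 0`, and suppose `P` minimizes
`L(X) = w₁|PX| + w₂|QX| + w₃|RX|` and `w₁ < w₂ + w₃`.  Then
`cos ∠QPR ≤ (w₁² − w₂² − w₃²) / (2 w₂ w₃)`, i.e. the angle `∠QPR` is at least
the outer angle between the sides `w₂`, `w₃` of a triangle with side lengths
`w₁, w₂, w₃`. -/
theorem angle_at_minimizer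
    (P Q R : EuclideanSpace ℝ (Fin 2)) (hQ : Q ≠ P) (hR : R ≠ P)
    (w₁ w₂ w₃ : ℝ) (h₁ : 0 ≤ w₁) (h₂ : 0 < w₂) (h₃ : 0 < w₃)
    (hmin : ∀ X : EuclideanSpace ℝ (Fin 2),
      w₁ * dist P P + w₂ * dist Q P + w₃ * dist R P
        ≤ w₁ * dist P X + w₂ * dist Q X + w₃ * dist R X)
    (hlt : w₁ < w₂ + w₃) :
    Real.cos (EuclideanGeometry.angle Q P R)
      ≤ (w₁ ^ 2 - w₂ ^ 2 - w₃ ^ 2) / (2 * w₂ * w₃) := by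
  set a : EuclideanSpace ℝ (Fin 2) := Q - P with ha
  set b : EuclideanSpace ℝ (Fin 2) := R - P with hb
  have hna : 0 < ‖a‖ := by
    rw [norm_pos_iff]; exact sub_ne_zero.mpr hQ
  have hnb : 0 < ‖b‖ := by
    rw [norm_pos_iff]; exact sub_ne_zero.mpr hR
  set v : EuclideanSpace ℝ (Fin 2) := (w₂ / ‖a‖) • a + (w₃ / ‖b‖) • b with hv
  clear_value a b v
  -- key first-order bound
  have key : ∀ (x u : EuclideanSpace ℝ (Fin 2)), 0 < ‖x‖ →
      ‖x - u‖ ≤ ‖x‖ - (inner ℝ x u : ℝ) / ‖x‖ + ‖u‖ ^ 2 / (2 * ‖x‖) := by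
    intro x u hx
    have hrw : ‖x‖ - (inner ℝ x u : ℝ) / ‖x‖ + ‖u‖ ^ 2 / (2 * ‖x‖)
        = (‖x - u‖ ^ 2 + ‖x‖ ^ 2) / (2 * ‖x‖) := by
      rw [norm_sub_sq_real]
      field_simp
      ring
    rw [hrw, le_div_iff₀ (by positivity)]
    nlinarith [sq_nonneg (‖x - u‖ - ‖x‖), norm_nonneg (x - u)]
  set C : ℝ := ‖v‖ ^ 2 * (w₂ / (2 * ‖a‖) + w₃ / (2 * ‖b‖)) with hC
  have hCnn : 0 ≤ C := by positivity
  have hvv : (inner ℝ v v : ℝ) = (w₂ / ‖a‖) * (inner ℝ a v : ℝ) + (w₃ / ‖b‖) * (inner ℝ b v : ℝ) := by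
    rw [hv, inner_add_left, real_inner_smul_left, real_inner_smul_left]
  have H : ∀ t : ℝ, 0 < t → ‖v‖ ^ 2 ≤ w₁ * ‖v‖ + t * C := by
    intro t ht
    have hmin' := hmin (P + t • v)
    have e0 : dist P P = 0 := dist_self P
    have e1 : dist P (P + t • v) = t * ‖v‖ := by
      rw [dist_self_add_right, norm_smul, Real.norm_eq_abs, abs_of_pos ht]
    have e2 : dist Q (P + t • v) = ‖a - t • v‖ := by
      rw [dist_eq_norm]; congr 1; rw [ha]; abel
    have e3 : dist R (P + t • v) = ‖b - t • v‖ := by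
      rw [dist_eq_norm]; congr 1; rw [hb]; abel
    have e4 : dist Q P = ‖a‖ := by rw [dist_eq_norm, ha]
    have e5 : dist R P = ‖b‖ := by rw [dist_eq_norm, hb]
    rw [e0, e1, e2, e3, e4, e5, mul_zero, zero_add] at hmin'
    have k2 := key a (t • v) hna
    have k3 := key b (t • v) hnb
    rw [real_inner_smul_right] at k2 k3
    have hn2 : ‖t • v‖ ^ 2 = t ^ 2 * ‖v‖ ^ 2 := by
      rw [norm_smul, Real.norm_eq_abs, mul_pow, sq_abs]
    rw [hn2] at k2 k3
    have m2 := mul_le_mul_of_nonneg_left k2 h₂.le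
    have m3 := mul_le_mul_of_nonneg_left k3 h₃.le
    have hCeq : w₂ * (t ^ 2 * ‖v‖ ^ 2 / (2 * ‖a‖)) + w₃ * (t ^ 2 * ‖v‖ ^ 2 / (2 * ‖b‖))
        = t ^ 2 * C := by
      rw [hC]; field_simp
    have step : w₂ * (t * (inner ℝ a v : ℝ) / ‖a‖) + w₃ * (t * (inner ℝ b v : ℝ) / ‖b‖)
        ≤ w₁ * (t * ‖v‖) + t ^ 2 * C := by
      linarith [m2, m3, hmin', hCeq]
    have lhs_eq : w₂ * (t * (inner ℝ a v : ℝ) / ‖a‖) + w₃ * (t * (inner ℝ b v : ℝ) / ‖b‖)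
        = t * ‖v‖ ^ 2 := by
      have : ‖v‖ ^ 2 = (inner ℝ v v : ℝ) := (real_inner_self_eq_norm_sq v).symm
      rw [this, hvv]
      field_simp
    rw [lhs_eq] at step
    have := mul_le_mul_of_nonneg_left step (le_of_lt (inv_pos.mpr ht))
    calc ‖v‖ ^ 2 = t⁻¹ * (t * ‖v‖ ^ 2) := by field_simp
      _ ≤ t⁻¹ * (w₁ * (t * ‖v‖) + t ^ 2 * C) := this
      _ = w₁ * ‖v‖ + t * C := by field_simp
  have hsq : ‖v‖ ^ 2 ≤ w₁ * ‖v‖ := by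
    rcases eq_or_lt_of_le hCnn with hC0 | hC0
    · have := H 1 one_pos; rw [← hC0] at this; linarith
    · refine le_of_forall_pos_le_add ?_
      intro ε hε
      have := H (ε / C) (by positivity)
      rw [div_mul_cancel₀ _ (ne_of_gt hC0)] at this
      exact this
  have hvw : ‖v‖ ^ 2 ≤ w₁ ^ 2 := by
    nlinarith [norm_nonneg v]
  -- expand ‖v‖²
  have hcos : Real.cos (EuclideanGeometry.angle Q P R) = (inner ℝ a b : ℝ) / (‖a‖ * ‖b‖) := by
    rw [EuclideanGeometry.angle, InnerProductGeometry.cos_angle]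
    simp only [vsub_eq_sub, ← ha, ← hb]
  have hav : (inner ℝ a v : ℝ) = w₂ / ‖a‖ * ‖a‖ ^ 2 + w₃ / ‖b‖ * (inner ℝ a b : ℝ) := by
    rw [hv, inner_add_right, real_inner_smul_right, real_inner_smul_right,
      real_inner_self_eq_norm_sq]
  have hbv : (inner ℝ b v : ℝ) = w₂ / ‖a‖ * (inner ℝ a b : ℝ) + w₃ / ‖b‖ * ‖b‖ ^ 2 := by
    rw [hv, inner_add_right, real_inner_smul_right, real_inner_smul_right,
      real_inner_self_eq_norm_sq, real_inner_comm b a]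
  have hexp : ‖v‖ ^ 2 = w₂ ^ 2 + w₃ ^ 2 + 2 * w₂ * w₃ * ((inner ℝ a b : ℝ) / (‖a‖ * ‖b‖)) := by
    rw [← real_inner_self_eq_norm_sq, hvv, hav, hbv]
    field_simp
    ring
  rw [hcos]
  rw [le_div_iff₀ (by positivity)]
  nlinarith [hvw, hexp]
end
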